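/- arXiv:1506.04538 — 7 statements merged into one kernel-verified Lean document; each statement's English description precedes it below -/
import Mathlib

section
/- Suppose B is Lorentzian of signature (1, n−1) on V and F is a nonzero p-form on V which is of type N with multiple null direction ℓ ≠ 0 and also of type N with multiple null direction ℓ′ ≠ 0. Then ℓ′ is a scalar multiple of ℓ. (The multiple null direction of a nonzero type N p-form is unique up to scale; this is used in the proof of Lemma B.3.) -/
open scoped BigOperators

/-- `ι_ℓ F = 0`: the interior product of the alternating form `F` with the vector `ℓ`
vanishes.  Since `F` is alternating, this is equivalent to saying that `F` vanishes
whenever one of its arguments equals `ℓ`. -/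
def IotaZero {V : Type*} [AddCommGroup V] [Module ℝ V] {p : ℕ}
    (F : AlternatingMap ℝ V ℝ (Fin p)) (ℓ : V) : Prop :=
  ∀ v : Fin p → V, (∃ i, v i = ℓ) → F v = 0

/-- `ℓ♭ ∧ F = 0` with respect to the bilinear form `B`. -/
def WedgeFlatZero {V : Type*} [AddCommGroup V] [Module ℝ V] {p : ℕ}
    (B : V →ₗ[ℝ] V →ₗ[ℝ] ℝ) (F : AlternatingMap ℝ V ℝ (Fin p)) (ℓ : V) : Prop :=
  ∀ v : Fin (p + 1) → V,
    ∑ i : Fin (p + 1), (-1 : ℝ) ^ (i : ℕ) * B ℓ (v i) * F (v ∘ i.succAbove) = 0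

/-- `F` is of type N with multiple null direction `ℓ` (Definition 1.1). -/
def TypeN {V : Type*} [AddCommGroup V] [Module ℝ V] {p : ℕ}
    (B : V →ₗ[ℝ] V →ₗ[ℝ] ℝ) (F : AlternatingMap ℝ V ℝ (Fin p)) (ℓ : V) : Prop :=
  IotaZero F ℓ ∧ WedgeFlatZero B F ℓ

/-- The signs `ε₀ = −1`, `ε_a = 1` for `a ≥ 1`. -/
def epsSign {n : ℕ} (a : Fin n) : ℝ := if (a : ℕ) = 0 then -1 else 1

/-- `e` is a pseudo-orthonormal basis for `B` of Lorentzian signature `(1, n−1)`: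
`B(e_a, e_b) = ε_a δ_{ab}` with `ε₀ = −1` and `ε_a = +1` otherwise. -/
def IsLorentzBasis {V : Type*} [AddCommGroup V] [Module ℝ V] {n : ℕ}
    (B : V →ₗ[ℝ] V →ₗ[ℝ] ℝ) (e : Module.Basis (Fin n) ℝ V) : Prop :=
  ∀ a b : Fin n, B (e a) (e b) = if a = b then epsSign a else 0

/-- Auxiliary: if `F w ≠ 0`, `u♭ ∧ F = 0` and `ι_{u'} F = 0`, then `B u u' = 0`. -/
lemma orth_aux {V : Type*} [AddCommGroup V] [Module ℝ V]
    (B : V →ₗ[ℝ] V →ₗ[ℝ] ℝ) {p : ℕ} (F : AlternatingMap ℝ V ℝ (Fin p))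
    {w : Fin p → V} (hwne : F w ≠ 0) {u u' : V}
    (hw : WedgeFlatZero B F u) (hi : IotaZero F u') : B u u' = 0 := by
  cases p with
  | zero =>
    have h := hw (fun _ => u')
    rw [Fin.sum_univ_one] at h
    have hF1 : F ((fun _ => u') ∘ (0 : Fin 1).succAbove) = F w :=
      congrArg F (Subsingleton.elim _ _)
    rw [hF1] at h
    simp only [Fin.val_zero, pow_zero, one_mul, mul_eq_zero] at h
    rcases h with h | h
    · exact h
    · exact absurd h hwne
  | succ q =>
    have h := hw (Fin.cons u' w)
    rw [Finset.sum_eq_single (0 : Fin (q + 2))] at h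
    · have hF1 : (Fin.cons u' w ∘ (0 : Fin (q + 2)).succAbove) = w := by
        funext j
        simp [Fin.succAbove_zero]
      rw [hF1] at h
      simp only [Fin.val_zero, pow_zero, one_mul, Fin.cons_zero, mul_eq_zero] at h
      rcases h with h | h
      · exact h
      · exact absurd h hwne
    · intro i _ hi0
      have hz : F (Fin.cons u' w ∘ i.succAbove) = 0 := by
        apply hi
        exact ⟨0, by rw [Function.comp_apply, Fin.succAbove_ne_zero_zero hi0, Fin.cons_zero]⟩
      rw [hz, mul_zero]
    · intro h; exact absurd (Finset.mem_univ _) h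

/-- the multiple null direction of a nonzero type N `p`-form on a
Lorentzian space of signature `(1, n−1)` is unique up to scale. -/
theorem typeN_direction_unique {V : Type*} [AddCommGroup V] [Module ℝ V]
    [FiniteDimensional ℝ V] {n : ℕ}
    (B : V →ₗ[ℝ] V →ₗ[ℝ] ℝ)
    (hLor : ∃ e : Module.Basis (Fin n) ℝ V, IsLorentzBasis B e)
    {p : ℕ} (F : AlternatingMap ℝ V ℝ (Fin p)) (hF : F ≠ 0)
    {ℓ ℓ' : V} (hℓ : ℓ ≠ 0) (hℓ' : ℓ' ≠ 0)
    (h1 : TypeN B F ℓ) (h2 : TypeN B F ℓ') :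
    ∃ c : ℝ, ℓ' = c • ℓ := by
  classical
  obtain ⟨e, he⟩ := hLor
  have hFw : ∃ w : Fin p → V, F w ≠ 0 := by
    by_contra h
    push_neg at h
    exact hF (AlternatingMap.ext fun w => by simpa using h w)
  obtain ⟨w, hwne⟩ := hFw
  have hBll : B ℓ ℓ = 0 := orth_aux B F hwne h1.2 h1.1
  have hBll' : B ℓ' ℓ' = 0 := orth_aux B F hwne h2.2 h2.1
  have hBcross : B ℓ ℓ' = 0 := orth_aux B F hwne h1.2 h2.1
  have hBcoord : ∀ u v : V, B u v = ∑ a : Fin n, e.repr u a * e.repr v a * epsSign a := by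
    intro u v
    have he' : ∀ a b : Fin n, B (e a) (e b) = if a = b then epsSign a else 0 := he
    conv_lhs => rw [← e.sum_repr u, ← e.sum_repr v]
    simp only [map_sum, map_smul, LinearMap.sum_apply, LinearMap.smul_apply, smul_eq_mul, he',
      mul_ite, mul_zero, Finset.mul_sum, Finset.sum_ite_eq, Finset.sum_ite_eq',
      Finset.mem_univ, if_true]
    apply Finset.sum_congr rfl
    intro a _
    ring
  cases n with
  | zero =>
    exfalso
    apply hℓ
    have := (e.sum_repr ℓ).symm
    simpa using this
  | succ m =>
    set sp : V → EuclideanSpace ℝ (Fin (m + 1)) :=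
      (fun u => WithLp.toLp 2 (fun a => if a = 0 then 0 else e.repr u a)) with hsp
    have key : ∀ u v : V,
        (inner ℝ (sp u) (sp v) : ℝ) = B u v + e.repr u 0 * e.repr v 0 := by
      intro u v
      rw [hBcoord u v, PiLp.inner_apply]
      have h0 : e.repr u 0 * e.repr v 0
          = ∑ a : Fin (m + 1), (if a = 0 then e.repr u a * e.repr v a else 0) := by
        rw [Finset.sum_ite_eq']
        simp
      rw [h0, ← Finset.sum_add_distrib]
      apply Finset.sum_congr rfl
      intro a _
      by_cases ha : a = 0
      · subst ha
        simp [hsp, epsSign]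
      · have ha' : (a : ℕ) ≠ 0 := fun hc => ha (Fin.ext hc)
        simp [hsp, ha, ha', epsSign, mul_comm]
    have hXX : (inner ℝ (sp ℓ) (sp ℓ) : ℝ) = e.repr ℓ 0 * e.repr ℓ 0 := by
      rw [key ℓ ℓ, hBll, zero_add]
    have hYY : (inner ℝ (sp ℓ') (sp ℓ') : ℝ) = e.repr ℓ' 0 * e.repr ℓ' 0 := by
      rw [key ℓ' ℓ', hBll', zero_add]
    have hXY : (inner ℝ (sp ℓ) (sp ℓ') : ℝ) = e.repr ℓ 0 * e.repr ℓ' 0 := by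
      rw [key ℓ ℓ', hBcross, zero_add]
    have hx0 : e.repr ℓ 0 ≠ 0 := by
      intro h0
      apply hℓ
      have hX0 : sp ℓ = 0 := by
        have hz : (inner ℝ (sp ℓ) (sp ℓ) : ℝ) = 0 := by rw [hXX, h0, zero_mul]
        exact inner_self_eq_zero.mp hz
      have hall : ∀ a : Fin (m + 1), e.repr ℓ a = 0 := by
        intro a
        by_cases ha : a = 0
        · rw [ha]; exact h0
        · have := congrArg (fun f : EuclideanSpace ℝ (Fin (m + 1)) => f a) hX0
          simpa [hsp, ha] using this
      have hrepr : e.repr ℓ = 0 := Finsupp.ext fun a => hall a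
      exact (LinearEquiv.map_eq_zero_iff e.repr).mp hrepr
    have hy0 : e.repr ℓ' 0 ≠ 0 := by
      intro h0
      apply hℓ'
      have hY0 : sp ℓ' = 0 := by
        have hz : (inner ℝ (sp ℓ') (sp ℓ') : ℝ) = 0 := by rw [hYY, h0, zero_mul]
        exact inner_self_eq_zero.mp hz
      have hall : ∀ a : Fin (m + 1), e.repr ℓ' a = 0 := by
        intro a
        by_cases ha : a = 0
        · rw [ha]; exact h0
        · have := congrArg (fun f : EuclideanSpace ℝ (Fin (m + 1)) => f a) hY0
          simpa [hsp, ha] using this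
      have hrepr : e.repr ℓ' = 0 := Finsupp.ext fun a => hall a
      exact (LinearEquiv.map_eq_zero_iff e.repr).mp hrepr
    have hXne : sp ℓ ≠ 0 := by
      intro hX0
      apply hx0
      have hz : (inner ℝ (sp ℓ) (sp ℓ) : ℝ) = 0 := by rw [hX0]; simp
      rw [hXX] at hz
      exact mul_self_eq_zero.mp hz
    have hYne : sp ℓ' ≠ 0 := by
      intro hY0
      apply hy0
      have hz : (inner ℝ (sp ℓ') (sp ℓ') : ℝ) = 0 := by rw [hY0]; simp
      rw [hYY] at hz
      exact mul_self_eq_zero.mp hz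
    have hnX : ‖sp ℓ‖ = |e.repr ℓ 0| := by
      have h1 : ‖sp ℓ‖ ^ 2 = (e.repr ℓ 0) ^ 2 := by
        rw [← real_inner_self_eq_norm_sq, hXX]; ring
      have h2 := congrArg Real.sqrt h1
      rwa [Real.sqrt_sq (norm_nonneg (sp ℓ)), Real.sqrt_sq_eq_abs] at h2
    have hnY : ‖sp ℓ'‖ = |e.repr ℓ' 0| := by
      have h1 : ‖sp ℓ'‖ ^ 2 = (e.repr ℓ' 0) ^ 2 := by
        rw [← real_inner_self_eq_norm_sq, hYY]; ring
      have h2 := congrArg Real.sqrt h1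
      rwa [Real.sqrt_sq (norm_nonneg (sp ℓ')), Real.sqrt_sq_eq_abs] at h2
    have hcs : ‖(inner ℝ (sp ℓ) (sp ℓ') : ℝ)‖ = ‖sp ℓ‖ * ‖sp ℓ'‖ := by
      rw [hXY, hnX, hnY, Real.norm_eq_abs, abs_mul]
    obtain ⟨r, hr0, hYX⟩ := (norm_inner_eq_norm_iff hXne hYne).mp hcs
    have hy0r : e.repr ℓ' 0 = r * e.repr ℓ 0 := by
      have h1 : (inner ℝ (sp ℓ) (sp ℓ') : ℝ) = r * (e.repr ℓ 0 * e.repr ℓ 0) := by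
        rw [hYX, real_inner_smul_right, hXX]
      rw [hXY] at h1
      exact mul_left_cancel₀ hx0 (by linear_combination h1)
    refine ⟨r, ?_⟩
    apply e.repr.injective
    ext a
    rw [map_smul]
    rw [Finsupp.smul_apply, smul_eq_mul]
    by_cases ha : a = 0
    · subst ha; exact hy0r
    · have hcomp := congrArg (fun f : EuclideanSpace ℝ (Fin (m + 1)) => f a) hYX
      simpa [hsp, ha] using hcomp
end

section
/- Let B be nondegenerate and let F be a p-form on V (p ≥ 1) of type N with multiple null direction ℓ ≠ 0. Then the 2p-form F ∧ F vanishes identically. Consequently every k-fold wedge power F ∧ ⋯ ∧ F with k ≥ 2 factors vanishes, so the Chern–Simons term α F ∧ ⋯ ∧ F (k ≥ 2) of the Maxwell–Chern–Simons equations vanishes identically for type N fields (Section 2.3.1). -/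
open scoped BigOperators

/-- The wedge product of a `p`-form and a `q`-form (the standard shuffle/exterior
product, realised via `AlternatingMap.domCoprod`). -/
noncomputable def wedge {V : Type*} [AddCommGroup V] [Module ℝ V] {p q : ℕ}
    (F : AlternatingMap ℝ V ℝ (Fin p)) (G : AlternatingMap ℝ V ℝ (Fin q)) :
    AlternatingMap ℝ V ℝ (Fin (p + q)) :=
  (TensorProduct.lid ℝ ℝ).toLinearMap.compAlternatingMap
    ((F.domCoprod G).domDomCongr finSumFinEquiv)

/-- The `k`-fold wedge power `F ∧ ⋯ ∧ F` of a `p`-form `F` (a `k·p`-form; the empty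
product is the constant `0`-form `1`). -/
noncomputable def wedgePow {V : Type*} [AddCommGroup V] [Module ℝ V] {p : ℕ}
    (F : AlternatingMap ℝ V ℝ (Fin p)) : (k : ℕ) → AlternatingMap ℝ V ℝ (Fin (p * k))
  | 0 =>
      letI : IsEmpty (Fin (p * 0)) := inferInstanceAs (IsEmpty (Fin 0))
      AlternatingMap.constOfIsEmpty ℝ V (Fin (p * 0)) 1
  | k + 1 => wedge (wedgePow F k) F

section Aux

variable {V : Type*} [AddCommGroup V] [Module ℝ V]

/-- Auxiliary: `P` is (pointwise) divisible by the covector `μ`, scaled by `c`. -/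
def DivAux (μ : V → ℝ) (c : ℝ) {ι : Type*} [Fintype ι] [DecidableEq ι]
    (P : (ι → V) → ℝ) : Prop :=
  ∃ R : ι → (ι → V) → ℝ,
    (∀ i u x, R i (Function.update u i x) = R i u) ∧
    ∀ u, c * P u = ∑ i, μ (u i) * R i u

lemma wedge_apply' {p q : ℕ} (A : AlternatingMap ℝ V ℝ (Fin p)) (C : AlternatingMap ℝ V ℝ (Fin q))
    (v : Fin (p + q) → V) :
    (p.factorial * q.factorial : ℝ) * wedge A C v =
      ∑ σ : Equiv.Perm (Fin p ⊕ Fin q), ((Equiv.Perm.sign σ : ℤ) : ℝ) *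
        (A (fun i => v (finSumFinEquiv (σ (Sum.inl i)))) *
         C (fun j => v (finSumFinEquiv (σ (Sum.inr j))))) := by
  have h := MultilinearMap.domCoprod_alternization_eq (R' := ℝ) A C
  have h2 := congrArg (fun m : AlternatingMap ℝ V (TensorProduct ℝ ℝ ℝ) (Fin p ⊕ Fin q) =>
    (TensorProduct.lid ℝ ℝ).toLinearMap (m (fun s => v (finSumFinEquiv s)))) h
  have h3 : wedge A C v =
      (TensorProduct.lid ℝ ℝ).toLinearMap ((A.domCoprod C) (fun s => v (finSumFinEquiv s))) := rfl
  simp only [MultilinearMap.alternatization_apply, MultilinearMap.domDomCongr_apply,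
    MultilinearMap.domCoprod_apply, AlternatingMap.coe_multilinearMap, map_sum,
    Units.smul_def, map_zsmul, TensorProduct.lid_tmul, smul_eq_mul,
    AlternatingMap.smul_apply, map_nsmul, Fintype.card_fin] at h2
  simp only [zsmul_eq_mul, nsmul_eq_mul, Nat.cast_mul] at h2
  rw [h3]
  rw [mul_assoc] at h2 ⊢
  exact h2.symm

lemma divaux_wedge {μ : V → ℝ} {c : ℝ} {p q : ℕ}
    (A : AlternatingMap ℝ V ℝ (Fin p)) {F : AlternatingMap ℝ V ℝ (Fin q)}
    (hF : DivAux μ c ⇑F) : DivAux μ c ⇑(wedge A F) := by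
  obtain ⟨S, hSu, hS⟩ := hF
  have hfac : ((p.factorial * q.factorial : ℕ) : ℝ) ≠ 0 := by positivity
  refine ⟨fun k w => ((p.factorial * q.factorial : ℕ) : ℝ)⁻¹ *
      ∑ σ : Equiv.Perm (Fin p ⊕ Fin q), ∑ j : Fin q,
        (if finSumFinEquiv (σ (Sum.inr j)) = k then
          ((Equiv.Perm.sign σ : ℤ) : ℝ) *
            (A (fun i => w (finSumFinEquiv (σ (Sum.inl i)))) *
             S j (fun j' => w (finSumFinEquiv (σ (Sum.inr j'))))) else 0), ?_, ?_⟩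
  · intro k u x
    simp only []
    congr 1
    refine Finset.sum_congr rfl fun σ _ => Finset.sum_congr rfl fun j _ => ?_
    by_cases h : finSumFinEquiv (σ (Sum.inr j)) = k
    · rw [if_pos h, if_pos h]
      have hAarg : (fun i => Function.update u k x (finSumFinEquiv (σ (Sum.inl i)))) =
          fun i => u (finSumFinEquiv (σ (Sum.inl i))) := by
        funext i
        refine Function.update_of_ne ?_ _ _
        rw [← h]
        intro hcontra
        exact Sum.inl_ne_inr (σ.injective (finSumFinEquiv.injective hcontra))
      have hSarg : (fun j' => Function.update u k x (finSumFinEquiv (σ (Sum.inr j')))) =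
          Function.update (fun j' => u (finSumFinEquiv (σ (Sum.inr j')))) j x := by
        funext j'
        by_cases hj : j' = j
        · subst hj
          rw [Function.update_self, h, Function.update_self]
        · rw [Function.update_of_ne hj]
          refine Function.update_of_ne ?_ _ _
          rw [← h]
          intro hcontra
          exact hj (Sum.inr_injective (σ.injective (finSumFinEquiv.injective hcontra)))
      rw [hAarg, hSarg, hSu]
    · rw [if_neg h, if_neg h]
  · intro w
    simp only []
    have key : ∑ k : Fin (p + q), μ (w k) * (((p.factorial * q.factorial : ℕ) : ℝ)⁻¹ *
        ∑ σ : Equiv.Perm (Fin p ⊕ Fin q), ∑ j : Fin q,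
          (if finSumFinEquiv (σ (Sum.inr j)) = k then
            ((Equiv.Perm.sign σ : ℤ) : ℝ) *
              (A (fun i => w (finSumFinEquiv (σ (Sum.inl i)))) *
               S j (fun j' => w (finSumFinEquiv (σ (Sum.inr j'))))) else 0)) =
        ∑ σ : Equiv.Perm (Fin p ⊕ Fin q), ((p.factorial * q.factorial : ℕ) : ℝ)⁻¹ *
          (((Equiv.Perm.sign σ : ℤ) : ℝ) *
          (A (fun i => w (finSumFinEquiv (σ (Sum.inl i)))) *
            (c * F (fun j' => w (finSumFinEquiv (σ (Sum.inr j'))))))) := by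
      calc ∑ k : Fin (p + q), μ (w k) * (((p.factorial * q.factorial : ℕ) : ℝ)⁻¹ *
            ∑ σ : Equiv.Perm (Fin p ⊕ Fin q), ∑ j : Fin q,
              (if finSumFinEquiv (σ (Sum.inr j)) = k then
                ((Equiv.Perm.sign σ : ℤ) : ℝ) *
                  (A (fun i => w (finSumFinEquiv (σ (Sum.inl i)))) *
                   S j (fun j' => w (finSumFinEquiv (σ (Sum.inr j'))))) else 0))
          = ∑ σ : Equiv.Perm (Fin p ⊕ Fin q), ∑ j : Fin q, ∑ k : Fin (p + q),
              (if finSumFinEquiv (σ (Sum.inr j)) = k then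
                μ (w k) * (((p.factorial * q.factorial : ℕ) : ℝ)⁻¹ *
                (((Equiv.Perm.sign σ : ℤ) : ℝ) *
                  (A (fun i => w (finSumFinEquiv (σ (Sum.inl i)))) *
                   S j (fun j' => w (finSumFinEquiv (σ (Sum.inr j'))))))) else 0) := by
            simp only [Finset.mul_sum, mul_ite, mul_zero]
            rw [Finset.sum_comm]
            exact Finset.sum_congr rfl fun σ _ => Finset.sum_comm
        _ = ∑ σ : Equiv.Perm (Fin p ⊕ Fin q), ∑ j : Fin q,
              μ (w (finSumFinEquiv (σ (Sum.inr j)))) *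
                (((p.factorial * q.factorial : ℕ) : ℝ)⁻¹ *
                (((Equiv.Perm.sign σ : ℤ) : ℝ) *
                  (A (fun i => w (finSumFinEquiv (σ (Sum.inl i)))) *
                   S j (fun j' => w (finSumFinEquiv (σ (Sum.inr j'))))))) := by
            refine Finset.sum_congr rfl fun σ _ => Finset.sum_congr rfl fun j _ => ?_
            rw [Finset.sum_ite_eq]
            simp
        _ = ∑ σ : Equiv.Perm (Fin p ⊕ Fin q), ((p.factorial * q.factorial : ℕ) : ℝ)⁻¹ *
              (((Equiv.Perm.sign σ : ℤ) : ℝ) *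
              (A (fun i => w (finSumFinEquiv (σ (Sum.inl i)))) *
                (c * F (fun j' => w (finSumFinEquiv (σ (Sum.inr j'))))))) := by
            refine Finset.sum_congr rfl fun σ _ => ?_
            rw [hS (fun j' => w (finSumFinEquiv (σ (Sum.inr j'))))]
            simp only [Finset.mul_sum]
            refine Finset.sum_congr rfl fun j _ => ?_
            ring
    rw [key]
    have hw := wedge_apply' A F w
    have hfin : ∑ σ : Equiv.Perm (Fin p ⊕ Fin q), ((p.factorial * q.factorial : ℕ) : ℝ)⁻¹ *
          (((Equiv.Perm.sign σ : ℤ) : ℝ) *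
          (A (fun i => w (finSumFinEquiv (σ (Sum.inl i)))) *
            (c * F (fun j' => w (finSumFinEquiv (σ (Sum.inr j'))))))) =
        ((p.factorial * q.factorial : ℕ) : ℝ)⁻¹ * (c *
          ∑ σ : Equiv.Perm (Fin p ⊕ Fin q), ((Equiv.Perm.sign σ : ℤ) : ℝ) *
            (A (fun i => w (finSumFinEquiv (σ (Sum.inl i)))) *
             F (fun j => w (finSumFinEquiv (σ (Sum.inr j)))))) := by
      simp only [Finset.mul_sum]
      refine Finset.sum_congr rfl fun σ _ => ?_
      ring
    rw [hfin, ← hw, Nat.cast_mul]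
    field_simp

lemma cancel {μ : V → ℝ} {c : ℝ} (hc : c ≠ 0) {ι κ : Type*} [Fintype ι] [Fintype κ]
    [DecidableEq ι] [DecidableEq κ]
    {P : (ι → V) → ℝ} {Q : (κ → V) → ℝ} (hP : DivAux μ c P) (hQ : DivAux μ c Q)
    (w : ι ⊕ κ → V) :
    ∑ σ : Equiv.Perm (ι ⊕ κ), ((Equiv.Perm.sign σ : ℤ) : ℝ) *
      (P (fun i => w (σ (Sum.inl i))) * Q (fun j => w (σ (Sum.inr j)))) = 0 := by
  obtain ⟨R, hRu, hR⟩ := hP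
  obtain ⟨S, hSu, hS⟩ := hQ
  have key : c ^ 2 * ∑ σ : Equiv.Perm (ι ⊕ κ), ((Equiv.Perm.sign σ : ℤ) : ℝ) *
      (P (fun i => w (σ (Sum.inl i))) * Q (fun j => w (σ (Sum.inr j)))) = 0 := by
    have step1 : ∀ σ : Equiv.Perm (ι ⊕ κ),
        c ^ 2 * (((Equiv.Perm.sign σ : ℤ) : ℝ) *
          (P (fun i => w (σ (Sum.inl i))) * Q (fun j => w (σ (Sum.inr j))))) =
        ∑ i : ι, ∑ j : κ, ((Equiv.Perm.sign σ : ℤ) : ℝ) *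
          ((μ (w (σ (Sum.inl i))) * R i (fun i' => w (σ (Sum.inl i')))) *
           (μ (w (σ (Sum.inr j))) * S j (fun j' => w (σ (Sum.inr j'))))) := by
      intro σ
      have e1 := hR (fun i' => w (σ (Sum.inl i')))
      have e2 := hS (fun j' => w (σ (Sum.inr j')))
      calc c ^ 2 * (((Equiv.Perm.sign σ : ℤ) : ℝ) *
          (P (fun i => w (σ (Sum.inl i))) * Q (fun j => w (σ (Sum.inr j))))) =
          ((Equiv.Perm.sign σ : ℤ) : ℝ) *
            ((c * P (fun i => w (σ (Sum.inl i)))) * (c * Q (fun j => w (σ (Sum.inr j))))) := by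
            ring
        _ = ((Equiv.Perm.sign σ : ℤ) : ℝ) *
            ((∑ i : ι, μ (w (σ (Sum.inl i))) * R i (fun i' => w (σ (Sum.inl i')))) *
             (∑ j : κ, μ (w (σ (Sum.inr j))) * S j (fun j' => w (σ (Sum.inr j'))))) := by
            rw [e1, e2]
        _ = _ := by rw [Finset.sum_mul_sum, Finset.mul_sum]; congr 1; funext i
                    rw [Finset.mul_sum]
    rw [Finset.mul_sum]
    have step2 : ∑ σ : Equiv.Perm (ι ⊕ κ), c ^ 2 * (((Equiv.Perm.sign σ : ℤ) : ℝ) *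
          (P (fun i => w (σ (Sum.inl i))) * Q (fun j => w (σ (Sum.inr j))))) =
        ∑ i : ι, ∑ j : κ, ∑ σ : Equiv.Perm (ι ⊕ κ), ((Equiv.Perm.sign σ : ℤ) : ℝ) *
          ((μ (w (σ (Sum.inl i))) * R i (fun i' => w (σ (Sum.inl i')))) *
           (μ (w (σ (Sum.inr j))) * S j (fun j' => w (σ (Sum.inr j'))))) := by
      rw [Finset.sum_congr rfl fun σ _ => step1 σ]
      rw [Finset.sum_comm]
      congr 1; funext i
      rw [Finset.sum_comm]
    rw [step2]
    apply Finset.sum_eq_zero; intro i _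
    apply Finset.sum_eq_zero; intro j _
    -- the inner sum vanishes by the swap involution
    set s : Equiv.Perm (ι ⊕ κ) := Equiv.swap (Sum.inl i) (Sum.inr j) with hs
    set g : Equiv.Perm (ι ⊕ κ) → ℝ := fun σ => ((Equiv.Perm.sign σ : ℤ) : ℝ) *
          ((μ (w (σ (Sum.inl i))) * R i (fun i' => w (σ (Sum.inl i')))) *
           (μ (w (σ (Sum.inr j))) * S j (fun j' => w (σ (Sum.inr j'))))) with hg
    have hgs : ∀ σ, g (σ * s) = - g σ := by
      intro σ
      have hsign : ((Equiv.Perm.sign (σ * s) : ℤ) : ℝ) = -((Equiv.Perm.sign σ : ℤ) : ℝ) := by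
        rw [map_mul, hs, Equiv.Perm.sign_swap (by simp)]
        push_cast
        ring
      have hA : (fun i' => w ((σ * s) (Sum.inl i'))) =
          Function.update (fun i' => w (σ (Sum.inl i'))) i (w (σ (Sum.inr j))) := by
        funext k
        by_cases hk : k = i
        · subst hk
          simp [hs, Equiv.Perm.mul_apply, Equiv.swap_apply_left]
        · rw [Function.update_of_ne hk]
          simp only [Equiv.Perm.mul_apply, hs]
          rw [Equiv.swap_apply_of_ne_of_ne (by simpa using hk) (by simp)]
      have hB : (fun j' => w ((σ * s) (Sum.inr j'))) =
          Function.update (fun j' => w (σ (Sum.inr j'))) j (w (σ (Sum.inl i))) := by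
        funext k
        by_cases hk : k = j
        · subst hk
          simp [hs, Equiv.Perm.mul_apply, Equiv.swap_apply_right]
        · rw [Function.update_of_ne hk]
          simp only [Equiv.Perm.mul_apply, hs]
          rw [Equiv.swap_apply_of_ne_of_ne (by simp) (by simpa using hk)]
      have hAi : (σ * s) (Sum.inl i) = σ (Sum.inr j) := by
        simp [hs, Equiv.Perm.mul_apply, Equiv.swap_apply_left]
      have hBj : (σ * s) (Sum.inr j) = σ (Sum.inl i) := by
        simp [hs, Equiv.Perm.mul_apply, Equiv.swap_apply_right]
      rw [hg]
      simp only []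
      rw [hsign, hA, hB, hAi, hBj, hRu, hSu]
      ring
    have hsum : ∑ σ : Equiv.Perm (ι ⊕ κ), g σ = ∑ σ : Equiv.Perm (ι ⊕ κ), g (σ * s) :=
      (Equiv.sum_comp (Equiv.mulRight s) g).symm
    have : ∑ σ : Equiv.Perm (ι ⊕ κ), g σ = - ∑ σ : Equiv.Perm (ι ⊕ κ), g σ := by
      calc ∑ σ : Equiv.Perm (ι ⊕ κ), g σ = ∑ σ : Equiv.Perm (ι ⊕ κ), g (σ * s) := hsum
        _ = ∑ σ : Equiv.Perm (ι ⊕ κ), - g σ := Finset.sum_congr rfl fun σ _ => hgs σ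
        _ = - ∑ σ : Equiv.Perm (ι ⊕ κ), g σ := by rw [Finset.sum_neg_distrib]
    linarith
  have hc2 : c ^ 2 ≠ 0 := pow_ne_zero _ hc
  exact (mul_eq_zero.mp key).resolve_left hc2

lemma divaux_of_flat {m : ℕ} {B : V →ₗ[ℝ] V →ₗ[ℝ] ℝ} {F : AlternatingMap ℝ V ℝ (Fin (m + 1))}
    {ℓ : V} (n : V) (hflat : WedgeFlatZero B F ℓ) :
    DivAux (fun x => B ℓ x) (B ℓ n) ⇑F := by
  refine ⟨fun i u => (-1 : ℝ) ^ (i : ℕ) * F (Fin.cons n (u ∘ i.succAbove)), ?_, ?_⟩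
  · intro i u x
    have hcomp : (Function.update u i x) ∘ i.succAbove = u ∘ i.succAbove :=
      funext fun k => Function.update_of_ne (Fin.succAbove_ne i k) _ _
    simp only []
    rw [hcomp]
  · intro u
    have h := hflat (Fin.cons n u)
    rw [Fin.sum_univ_succ] at h
    have h0 : Fin.cons (α := fun _ => V) n u ∘ (0 : Fin (m + 1 + 1)).succAbove = u :=
      funext fun k => by simp [Fin.zero_succAbove]
    have hsucc : ∀ j : Fin (m + 1),
        Fin.cons (α := fun _ => V) n u ∘ (Fin.succ j).succAbove =
          Fin.cons (α := fun _ => V) n (u ∘ j.succAbove) := by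
      intro j
      funext k
      induction k using Fin.cases with
      | zero => simp [Fin.succ_succAbove_zero]
      | succ k => simp [Fin.succ_succAbove_succ]
    simp only [Fin.val_zero, pow_zero, one_mul, Fin.cons_zero, Fin.cons_succ, h0,
      Fin.val_succ, pow_succ] at h
    have hrw : ∀ j : Fin (m + 1),
        (-1 : ℝ) ^ (j : ℕ) * -1 * (B ℓ) (u j) * F (Fin.cons n u ∘ (Fin.succ j).succAbove) =
        - ((B ℓ) (u j) * ((-1 : ℝ) ^ (j : ℕ) * F (Fin.cons n (u ∘ j.succAbove)))) := by
      intro j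
      rw [hsucc j]
      ring
    rw [Finset.sum_congr rfl fun j _ => hrw j] at h
    rw [Finset.sum_neg_distrib] at h
    linarith

lemma wedge_eq_zero_of_divaux {μ : V → ℝ} {c : ℝ} (hc : c ≠ 0) {p q : ℕ}
    {P : AlternatingMap ℝ V ℝ (Fin p)} {Q : AlternatingMap ℝ V ℝ (Fin q)}
    (hP : DivAux μ c ⇑P) (hQ : DivAux μ c ⇑Q) : wedge P Q = 0 := by
  ext v
  have h := wedge_apply' P Q v
  have h2 := cancel hc hP hQ (fun s => v (finSumFinEquiv s))
  have h3 : (p.factorial * q.factorial : ℝ) * wedge P Q v = 0 := h.trans h2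
  have hfac : (p.factorial * q.factorial : ℝ) ≠ 0 := by positivity
  have := (mul_eq_zero.mp h3).resolve_left hfac
  simpa using this

end Aux

/-- for a type N `p`-form `F` (`p ≥ 1`, nondegenerate `B`, `ℓ ≠ 0`) the
`2p`-form `F ∧ F` vanishes; consequently every `k`-fold wedge power with `k ≥ 2`
factors vanishes (so any Chern–Simons term with `k ≥ 2` factors vanishes identically). -/
theorem typeN_wedge_self_eq_zero {V : Type*} [AddCommGroup V] [Module ℝ V]
    [FiniteDimensional ℝ V]
    (B : V →ₗ[ℝ] V →ₗ[ℝ] ℝ) (hBsymm : ∀ x y : V, B x y = B y x)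
    (hBnondeg : ∀ x : V, (∀ y : V, B x y = 0) → x = 0)
    {p : ℕ} (hp : 1 ≤ p) (F : AlternatingMap ℝ V ℝ (Fin p))
    {ℓ : V} (hℓ : ℓ ≠ 0) (hN : TypeN B F ℓ) :
    wedge F F = 0 ∧ ∀ k : ℕ, 2 ≤ k → wedgePow F k = 0 := by
  obtain ⟨m, rfl⟩ : ∃ m, p = m + 1 := ⟨p - 1, (Nat.succ_pred_eq_of_pos hp).symm⟩
  have hex : ∃ n : V, B ℓ n ≠ 0 := by
    by_contra h
    push_neg at h
    exact hℓ (hBnondeg ℓ h)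
  obtain ⟨n, hc⟩ := hex
  have hF : DivAux (fun x => B ℓ x) (B ℓ n) ⇑F := divaux_of_flat n hN.2
  constructor
  · exact wedge_eq_zero_of_divaux hc hF hF
  · intro k hk
    obtain ⟨j, rfl⟩ : ∃ j, k = j + 2 := ⟨k - 2, by omega⟩
    have h1 : DivAux (fun x => B ℓ x) (B ℓ n) ⇑(wedgePow F (j + 1)) :=
      divaux_wedge (wedgePow F j) hF
    exact wedge_eq_zero_of_divaux hc h1 hF
end

section
/- Let B be Lorentzian of signature (1, n−1) on V with n ≥ 3, and let F be a nonzero 2-form on V of type N with multiple null direction ℓ ≠ 0. Then there exists m ∈ V with B(ℓ,m) = 0 and B(m,m) > 0 such that F(x,y) = B(ℓ,x)B(m,y) − B(m,x)B(ℓ,y) for all x,y ∈ V. (A type N bivector is decomposable as the wedge of its null direction with an orthogonal spacelike vector.) -/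
open scoped BigOperators

lemma epsSign_sq {n : ℕ} (a : Fin n) : epsSign a * epsSign a = 1 := by
  unfold epsSign; split <;> norm_num

lemma Bcoord {V : Type*} [AddCommGroup V] [Module ℝ V] {n : ℕ}
    (B : V →ₗ[ℝ] V →ₗ[ℝ] ℝ) (e : Module.Basis (Fin n) ℝ V)
    (hL : ∀ a b : Fin n, B (e a) (e b) = if a = b then epsSign a else 0)
    (x y : V) : B x y = ∑ a, epsSign a * (e.repr x a * e.repr y a) := by
  conv_lhs => rw [← e.sum_repr x, ← e.sum_repr y]
  simp [-Module.Basis.sum_repr, map_sum, Finset.mul_sum, hL, mul_ite, Finset.sum_ite_eq]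
  exact Finset.sum_congr rfl fun a _ => by ring

lemma vecpair_update {V : Type*} [AddCommGroup V] (u x : V) :
    (![u, x] : Fin 2 → V) = Function.update ![u, u] 1 x := by
  funext i; fin_cases i <;> simp

noncomputable def phiMap {V : Type*} [AddCommGroup V] [Module ℝ V]
    (F : AlternatingMap ℝ V ℝ (Fin 2)) (u : V) : V →ₗ[ℝ] ℝ where
  toFun x := F ![u, x]
  map_add' x y := by
    show F ![u, x + y] = F ![u, x] + F ![u, y]
    rw [vecpair_update u x, vecpair_update u y, vecpair_update u (x+y), F.map_update_add]
  map_smul' c x := by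
    show F ![u, c • x] = c • F ![u, x]
    rw [vecpair_update u x, vecpair_update u (c • x), F.map_update_smul]

@[simp] lemma phiMap_apply {V : Type*} [AddCommGroup V] [Module ℝ V]
    (F : AlternatingMap ℝ V ℝ (Fin 2)) (u x : V) : phiMap F u x = F ![u, x] := rfl

lemma exists_dual {V : Type*} [AddCommGroup V] [Module ℝ V] {n : ℕ}
    (B : V →ₗ[ℝ] V →ₗ[ℝ] ℝ) (e : Module.Basis (Fin n) ℝ V)
    (hL : ∀ a b : Fin n, B (e a) (e b) = if a = b then epsSign a else 0)
    (φ : V →ₗ[ℝ] ℝ) : ∃ m : V, B m = φ := by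
  refine ⟨∑ a, (epsSign a * φ (e a)) • e a, e.ext fun b => ?_⟩
  simp only [map_sum, map_smul, LinearMap.sum_apply, LinearMap.smul_apply, smul_eq_mul, hL]
  rw [Finset.sum_eq_single b]
  · simp only [if_true]
    rw [mul_comm (epsSign b) (φ (e b)), mul_assoc, epsSign_sq, mul_one]
  · intro a _ hab; simp [hab]
  · simp


/-- a nonzero type N 2-form on a Lorentzian space (`n ≥ 3`) is
decomposable as the wedge of its multiple null direction `ℓ` with an orthogonal
spacelike vector `m`. -/
theorem typeN_two_form_decomposable {V : Type*} [AddCommGroup V] [Module ℝ V]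
    [FiniteDimensional ℝ V] {n : ℕ} (hn : 3 ≤ n)
    (B : V →ₗ[ℝ] V →ₗ[ℝ] ℝ)
    (hLor : ∃ e : Module.Basis (Fin n) ℝ V, IsLorentzBasis B e)
    (F : AlternatingMap ℝ V ℝ (Fin 2)) (hF : F ≠ 0)
    {ℓ : V} (hℓ : ℓ ≠ 0) (hN : TypeN B F ℓ) :
    ∃ m : V, B ℓ m = 0 ∧ 0 < B m m ∧
      ∀ x y : V, F ![x, y] = B ℓ x * B m y - B m x * B ℓ y := by
  haveI : NeZero n := ⟨by omega⟩
  obtain ⟨e, hL⟩ := hLor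
  obtain ⟨hι, hw⟩ := hN
  -- key algebraic identity from ℓ♭ ∧ F = 0
  have key : ∀ x y z : V,
      B ℓ x * F ![y, z] - B ℓ y * F ![x, z] + B ℓ z * F ![x, y] = 0 := by
    intro x y z
    have h := hw ![x, y, z]
    have e0 : (![x,y,z] ∘ Fin.succAbove 0) = ![y, z] := by
      funext i; fin_cases i <;> rfl
    have e1 : (![x,y,z] ∘ Fin.succAbove 1) = ![x, z] := by
      funext i; fin_cases i <;> rfl
    have e2 : (![x,y,z] ∘ Fin.succAbove 2) = ![x, y] := by
      funext i; fin_cases i <;> rfl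
    rw [Fin.sum_univ_three] at h
    simp only [e0, e1, e2] at h
    norm_num at h
    simp only [show (![x,y,z] : Fin 3 → V) 2 = z from rfl] at h
    linarith [h]
  -- symmetry of B
  have Bsym : ∀ x y : V, B x y = B y x := by
    intro x y
    rw [Bcoord B e hL, Bcoord B e hL]
    exact Finset.sum_congr rfl fun a _ => by ring
  -- find u with B ℓ u ≠ 0
  have hrepr : ∃ a : Fin n, e.repr ℓ a ≠ 0 := by
    by_contra h
    push_neg at h
    apply hℓ
    have := e.sum_repr ℓ
    rw [← this]
    simp [h]
  obtain ⟨a₀, ha₀⟩ := hrepr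
  set u : V := epsSign a₀ • e a₀ with hu
  have hc : B ℓ u = e.repr ℓ a₀ := by
    rw [hu, map_smul, smul_eq_mul, Bsym ℓ (e a₀), Bcoord B e hL]
    simp only [e.repr_self, Finsupp.single_apply]
    rw [Finset.sum_eq_single a₀]
    · simp only [if_true, one_mul]
      linear_combination e.repr ℓ a₀ * epsSign_sq a₀
    · intro b _ hb; simp [Ne.symm hb]
    · simp
  have hcne : B ℓ u ≠ 0 := by rw [hc]; exact ha₀
  set c : ℝ := B ℓ u with hcdef
  -- dual vector m₀ of x ↦ c⁻¹ F(u,x)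
  obtain ⟨m₀, hm₀⟩ := exists_dual B e hL (c⁻¹ • phiMap F u)
  have hmx : ∀ x : V, F ![u, x] = c * B m₀ x := by
    intro x
    rw [hm₀]
    simp only [LinearMap.smul_apply, phiMap_apply, smul_eq_mul]
    field_simp
  -- the decomposition formula
  have hform : ∀ x y : V, F ![x, y] = B ℓ x * B m₀ y - B m₀ x * B ℓ y := by
    intro x y
    have hk := key u x y
    rw [hmx y, hmx x] at hk
    apply mul_left_cancel₀ hcne
    linear_combination hk
  -- B ℓ m₀ = 0
  have hBlm : B ℓ m₀ = 0 := by
    rw [Bsym]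
    have : F ![u, ℓ] = 0 := hι ![u, ℓ] ⟨1, rfl⟩
    rw [hmx ℓ] at this
    rcases mul_eq_zero.mp this with h | h
    · exact absurd h hcne
    · exact h
  -- some pair with F ≠ 0
  have hF2 : ∃ x y : V, F ![x, y] ≠ 0 := by
    by_contra h
    push_neg at h
    apply hF
    apply AlternatingMap.ext
    intro v
    have hv : v = ![v 0, v 1] := by funext i; fin_cases i <;> rfl
    rw [hv]
    simp [h]
  -- B m₀ is not identically zero
  have hm₀ne : ∃ y, B m₀ y ≠ 0 := by
    obtain ⟨x, y, hxy⟩ := hF2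
    by_contra h
    push_neg at h
    rw [hform x y, h x, h y] at hxy
    simp at hxy
  -- ℓ is null
  have hll : B ℓ ℓ = 0 := by
    obtain ⟨y, hy⟩ := hm₀ne
    have h0 : F ![ℓ, y] = 0 := hι ![ℓ, y] ⟨0, rfl⟩
    rw [hform ℓ y, Bsym m₀ ℓ, hBlm] at h0
    simp at h0
    rcases h0 with h | h
    · exact h
    · exact absurd h hy
  -- coordinate setup
  have split : ∀ x y : V, B x y =
      -(e.repr x 0 * e.repr y 0) + ∑ a ∈ Finset.univ.erase (0 : Fin n),
        e.repr x a * e.repr y a := by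
    intro x y
    rw [Bcoord B e hL, ← Finset.add_sum_erase _ _ (Finset.mem_univ (0 : Fin n))]
    congr 1
    · simp [epsSign]
    · apply Finset.sum_congr rfl
      intro a ha
      have hane : a ≠ 0 := (Finset.mem_erase.mp ha).1
      have : (a : ℕ) ≠ 0 := fun h => hane (Fin.ext (by simp [h]))
      simp [epsSign, this]
  set s := Finset.univ.erase (0 : Fin n) with hs
  set L : Fin n → ℝ := fun a => e.repr ℓ a with hLf
  set M : Fin n → ℝ := fun a => e.repr m₀ a with hMf
  have hA : L 0 * L 0 = ∑ a ∈ s, L a * L a := by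
    have := split ℓ ℓ; rw [hll] at this; linarith
  have hP : L 0 * M 0 = ∑ a ∈ s, L a * M a := by
    have := split ℓ m₀; rw [hBlm] at this; linarith
  have hQ : B m₀ m₀ = -(M 0 * M 0) + ∑ a ∈ s, M a * M a := split m₀ m₀
  -- L 0 ≠ 0
  have hL0 : L 0 ≠ 0 := by
    intro h0
    have hzero : ∀ a ∈ s, L a * L a = 0 := by
      apply (Finset.sum_eq_zero_iff_of_nonneg (fun a _ => mul_self_nonneg (L a))).mp
      rw [← hA, h0]; ring
    apply hℓ
    have hall : ∀ a : Fin n, e.repr ℓ a = 0 := by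
      intro a
      by_cases ha : a = 0
      · rw [ha]; exact h0
      · have := hzero a (Finset.mem_erase.mpr ⟨ha, Finset.mem_univ a⟩)
        exact mul_self_eq_zero.mp this
    rw [← e.sum_repr ℓ]
    simp [hall]
  -- positivity
  have hpos : 0 < B m₀ m₀ := by
    by_contra hneg
    push_neg at hneg
    set t : ℝ := M 0 / L 0 with ht
    have hS : ∑ a ∈ s, (M a - t * L a)^2 =
        (∑ a ∈ s, M a * M a) - 2*t*(∑ a ∈ s, L a * M a)
          + t^2*(∑ a ∈ s, L a * L a) := by
      rw [Finset.mul_sum, Finset.mul_sum, ← Finset.sum_sub_distrib,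
        ← Finset.sum_add_distrib]
      exact Finset.sum_congr rfl fun a _ => by ring
    have hSval : ∑ a ∈ s, (M a - t * L a)^2 = (∑ a ∈ s, M a * M a) - M 0 * M 0 := by
      rw [hS, ← hA, ← hP, ht]
      field_simp
      ring
    have hSnonneg : 0 ≤ ∑ a ∈ s, (M a - t * L a)^2 :=
      Finset.sum_nonneg fun a _ => sq_nonneg _
    have hSle : ∑ a ∈ s, (M a - t * L a)^2 ≤ 0 := by
      rw [hSval]; rw [hQ] at hneg; linarith
    have hS0 : ∀ a ∈ s, (M a - t * L a)^2 = 0 :=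
      (Finset.sum_eq_zero_iff_of_nonneg (fun a _ => sq_nonneg _)).mp
        (le_antisymm hSle hSnonneg)
    have hMa : ∀ a : Fin n, M a = t * L a := by
      intro a
      by_cases ha : a = 0
      · rw [ha, ht]; field_simp
      · have := hS0 a (Finset.mem_erase.mpr ⟨ha, Finset.mem_univ a⟩)
        have := pow_eq_zero_iff (n := 2) (by norm_num) |>.mp this
        linarith [sub_eq_zero.mp this]
    -- then B m₀ = t * B ℓ, so F = 0
    have hprop : ∀ y : V, B m₀ y = t * B ℓ y := by
      intro y
      rw [Bcoord B e hL, Bcoord B e hL, Finset.mul_sum]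
      exact Finset.sum_congr rfl fun a _ => by
        have := hMa a; simp only [hMf] at this; rw [this]; ring
    obtain ⟨x, y, hxy⟩ := hF2
    apply hxy
    rw [hform x y, hprop x, hprop y]
    ring
  exact ⟨m₀, hBlm, hpos, hform⟩
end

section
/- Let B be Lorentzian of signature (1, n−1) on V, let (e₀,…,e_{n−1}) be any pseudo-orthonormal basis, and let F be a p-form on V (1 ≤ p ≤ n−1) of type N with multiple null direction ℓ ≠ 0. Then F² := Σ_{a₁,…,a_p = 0}^{n−1} ε_{a₁}⋯ε_{a_p} F(e_{a₁},…,e_{a_p})² = 0. (The zeroth-order scalar invariant F_{a₁…a_p}F^{a₁…a_p} of a type N p-form vanishes, generalizing the null-field condition (1.1).) -/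
open scoped BigOperators

/-- the zeroth-order scalar invariant
`F² = Σ ε_{a₁}⋯ε_{a_p} F(e_{a₁},…,e_{a_p})²` of a type N `p`-form vanishes. -/
theorem typeN_F_squared_zero {V : Type*} [AddCommGroup V] [Module ℝ V]
    [FiniteDimensional ℝ V] {n : ℕ}
    (B : V →ₗ[ℝ] V →ₗ[ℝ] ℝ)
    (e : Module.Basis (Fin n) ℝ V) (he : IsLorentzBasis B e)
    {p : ℕ} (hp1 : 1 ≤ p) (hpn : p ≤ n - 1)
    (F : AlternatingMap ℝ V ℝ (Fin p))
    {ℓ : V} (hℓ : ℓ ≠ 0) (hN : TypeN B F ℓ) :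
    ∑ a : Fin p → Fin n,
      (∏ i : Fin p, epsSign (a i)) * (F (fun i => e (a i))) ^ 2 = 0 := by
  classical
  obtain ⟨hι, hw⟩ := hN
  set L : Fin n → ℝ := fun a => B ℓ (e a) with hLdef
  have heps2 : ∀ c : Fin n, epsSign c * epsSign c = 1 := by
    intro c; unfold epsSign; split <;> norm_num
  -- coordinates of ℓ
  have hrepr : ∀ c : Fin n, epsSign c * L c = e.repr ℓ c := by
    intro c
    have hexp : L c = ∑ a : Fin n, e.repr ℓ a * B (e a) (e c) := by
      simp only [hLdef]
      conv_lhs => rw [← e.sum_repr ℓ]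
      simp [map_sum, smul_eq_mul, -Module.Basis.sum_repr]
    have h2 : L c = e.repr ℓ c * epsSign c := by
      rw [hexp, Finset.sum_eq_single c]
      · rw [he c c]; simp
      · intro a _ hac; rw [he a c]; simp [hac]
      · simp
    rw [h2]
    calc epsSign c * (e.repr ℓ c * epsSign c)
        = e.repr ℓ c * (epsSign c * epsSign c) := by ring
      _ = e.repr ℓ c := by rw [heps2]; ring
  have hell : ∑ c : Fin n, (epsSign c * L c) • e c = ℓ := by
    calc ∑ c : Fin n, (epsSign c * L c) • e c
        = ∑ c : Fin n, e.repr ℓ c • e c := by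
          refine Finset.sum_congr rfl fun c _ => ?_; rw [hrepr]
      _ = ℓ := e.sum_repr ℓ
  -- key fact 1 : contracting with ℓ in any slot kills F
  have key1 : ∀ (w : Fin p → V) (i : Fin p),
      ∑ c : Fin n, epsSign c * L c * F (Function.update w i (e c)) = 0 := by
    intro w i
    have hsum : F (Function.update w i (∑ c : Fin n, (epsSign c * L c) • e c))
        = ∑ c : Fin n, F (Function.update w i ((epsSign c * L c) • e c)) :=
      F.toMultilinearMap.map_update_sum Finset.univ i _ w
    rw [hell] at hsum
    have h0 : F (Function.update w i ℓ) = 0 :=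
      hι _ ⟨i, Function.update_self _ _ _⟩
    calc ∑ c : Fin n, epsSign c * L c * F (Function.update w i (e c))
        = ∑ c : Fin n, F (Function.update w i ((epsSign c * L c) • e c)) := by
          refine Finset.sum_congr rfl fun c _ => ?_
          rw [F.map_update_smul]
          simp [smul_eq_mul, mul_assoc]
      _ = F (Function.update w i ℓ) := hsum.symm
      _ = 0 := h0
  -- pick b with L b ≠ 0
  have hb : ∃ b : Fin n, L b ≠ 0 := by
    by_contra h
    push_neg at h
    exact hℓ (by rw [← hell]; simp [h])
  obtain ⟨b, hLb⟩ := hb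
  -- the auxiliary forms
  set G : Fin p → (Fin p → Fin n) → ℝ := fun i a =>
    F ((Fin.cons (e b) (fun j => e (a j)) : Fin (p + 1) → V) ∘ (Fin.succ i).succAbove)
    with hGdef
  -- key fact 2 : wedge identity at basis vectors
  have key2 : ∀ a : Fin p → Fin n,
      L b * F (fun k => e (a k))
        = ∑ i : Fin p, (-1 : ℝ) ^ (i : ℕ) * L (a i) * G i a := by
    intro a
    have h := hw (Fin.cons (e b) (fun j => e (a j)))
    rw [Fin.sum_univ_succ] at h
    have h0 : (Fin.cons (e b) (fun j => e (a j)) : Fin (p + 1) → V)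
        ∘ (0 : Fin (p + 1)).succAbove = fun k => e (a k) := by
      funext k
      simp [Fin.zero_succAbove, Fin.cons_succ]
    rw [h0] at h
    simp only [Fin.cons_zero, Fin.val_zero, pow_zero, one_mul, Fin.cons_succ,
      Fin.val_succ] at h
    have := h
    have hterm : ∀ i : Fin p,
        (-1 : ℝ) ^ ((i : ℕ) + 1) * B ℓ (e (a i))
          * F ((Fin.cons (e b) (fun j => e (a j)) : Fin (p + 1) → V)
              ∘ (Fin.succ i).succAbove)
        = -((-1 : ℝ) ^ (i : ℕ) * L (a i) * G i a) := by
      intro i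
      simp only [hGdef, hLdef, pow_succ]
      ring
    rw [Finset.sum_congr rfl fun i _ => hterm i] at this
    rw [Finset.sum_neg_distrib] at this
    linarith [this]
  -- G i is independent of the i-th index
  have hG : ∀ (i : Fin p) (a : Fin p → Fin n) (c : Fin n),
      G i (Function.update a i c) = G i a := by
    intro i a c
    simp only [hGdef]
    refine congrArg F ?_
    funext j
    have hm : (Fin.succ i).succAbove j ≠ Fin.succ i := Fin.succAbove_ne _ _
    rcases Fin.eq_zero_or_eq_succ ((Fin.succ i).succAbove j) with h | ⟨k, hk⟩
    · simp [Function.comp_apply, h]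
    · have hk' : k ≠ i := by
        intro hki; rw [hki] at hk; exact hm hk
      simp [Function.comp_apply, hk, Fin.cons_succ, Function.update_of_ne hk']
  -- Lemma A
  have keyA : ∀ (i : Fin p) (g : (Fin p → Fin n) → ℝ),
      (∀ a c, g (Function.update a i c) = g a) →
      ∑ a : Fin p → Fin n,
        (∏ j, epsSign (a j)) * L (a i) * F (fun k => e (a k)) * g a = 0 := by
    intro i g hg
    have npos : 0 < n := by omega
    rw [← Equiv.sum_comp (Equiv.funSplitAt i (Fin n)).symm
      (fun a => (∏ j, epsSign (a j)) * L (a i) * F (fun k => e (a k)) * g a)]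
    rw [Fintype.sum_prod_type, Finset.sum_comm]
    refine Finset.sum_eq_zero fun f _ => ?_
    set a0 : Fin p → Fin n := (Equiv.funSplitAt i (Fin n)).symm (⟨0, npos⟩, f) with ha0
    have hup : ∀ c : Fin n,
        (Equiv.funSplitAt i (Fin n)).symm (c, f) = Function.update a0 i c := by
      intro c
      funext j
      by_cases hj : j = i
      · subst hj
        simp [Equiv.funSplitAt, Equiv.piSplitAt, Function.update_self]
      · simp [ha0, Equiv.funSplitAt, Equiv.piSplitAt, hj, Function.update_of_ne hj]
    have hcoord : ∀ c : Fin n, Function.update a0 i c i = c := fun c =>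
      Function.update_self _ _ _
    set w : Fin p → V := fun k => e (a0 k) with hwdef
    have hew : ∀ c k, e (Function.update a0 i c k) = Function.update w i (e c) k := by
      intro c k
      by_cases hk : k = i
      · subst hk; simp
      · simp [hwdef, Function.update_of_ne hk]
    set P : ℝ := ∏ j ∈ Finset.univ.erase i, epsSign (a0 j) with hP
    have hprod : ∀ c : Fin n,
        (∏ j, epsSign (Function.update a0 i c j)) = epsSign c * P := by
      intro c
      rw [← Finset.mul_prod_erase Finset.univ _ (Finset.mem_univ i)]
      rw [hcoord]
      congr 1
      refine Finset.prod_congr rfl fun j hj => ?_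
      rw [Function.update_of_ne (Finset.ne_of_mem_erase hj)]
    calc ∑ c : Fin n,
          (∏ j, epsSign (((Equiv.funSplitAt i (Fin n)).symm (c, f)) j))
            * L (((Equiv.funSplitAt i (Fin n)).symm (c, f)) i)
            * F (fun k => e (((Equiv.funSplitAt i (Fin n)).symm (c, f)) k))
            * g ((Equiv.funSplitAt i (Fin n)).symm (c, f))
        = ∑ c : Fin n,
          (epsSign c * L c * F (Function.update w i (e c))) * (P * g a0) := by
          refine Finset.sum_congr rfl fun c _ => ?_
          rw [hup c, hprod c, hcoord c, hg a0 c]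
          have : (fun k => e (Function.update a0 i c k)) = Function.update w i (e c) := by
            funext k; exact hew c k
          rw [this]
          ring
      _ = (∑ c : Fin n, epsSign c * L c * F (Function.update w i (e c))) * (P * g a0) := by
          rw [Finset.sum_mul]
      _ = 0 := by rw [key1 w i]; ring
  -- main computation
  have main : L b * ∑ a : Fin p → Fin n,
      (∏ i : Fin p, epsSign (a i)) * (F (fun i => e (a i))) ^ 2 = 0 := by
    rw [Finset.mul_sum]
    calc ∑ a : Fin p → Fin n,
          L b * ((∏ i : Fin p, epsSign (a i)) * (F (fun i => e (a i))) ^ 2)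
        = ∑ a : Fin p → Fin n, (∏ j, epsSign (a j)) * F (fun k => e (a k))
            * (L b * F (fun k => e (a k))) := by
          refine Finset.sum_congr rfl fun a _ => ?_; ring
      _ = ∑ a : Fin p → Fin n, ∑ i : Fin p,
            (∏ j, epsSign (a j)) * L (a i) * F (fun k => e (a k))
              * ((-1 : ℝ) ^ (i : ℕ) * G i a) := by
          refine Finset.sum_congr rfl fun a _ => ?_
          rw [key2 a, Finset.mul_sum]
          refine Finset.sum_congr rfl fun i _ => ?_; ring
      _ = ∑ i : Fin p, ∑ a : Fin p → Fin n,
            (∏ j, epsSign (a j)) * L (a i) * F (fun k => e (a k))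
              * ((-1 : ℝ) ^ (i : ℕ) * G i a) := Finset.sum_comm
      _ = 0 := by
          refine Finset.sum_eq_zero fun i _ => ?_
          exact keyA i (fun a => (-1 : ℝ) ^ (i : ℕ) * G i a)
            (fun a c => by
              show (-1 : ℝ) ^ (i : ℕ) * G i (Function.update a i c)
                  = (-1 : ℝ) ^ (i : ℕ) * G i a
              rw [hG i a c])
  rcases mul_eq_zero.mp main with h | h
  · exact absurd h hLb
  · exact h
end

section
/- Let B be Lorentzian of signature (1, n−1) on V, let (e₀,…,e_{n−1}) be a pseudo-orthonormal basis, let F be a nonzero p-form on V (1 ≤ p ≤ n−1) of type N with multiple null direction ℓ ≠ 0, and define S_F(x,y) := Σ_{a₁,…,a_{p−1}=0}^{n−1} ε_{a₁}⋯ε_{a_{p−1}} F(x, e_{a₁},…,e_{a_{p−1}}) F(y, e_{a₁},…,e_{a_{p−1}}). If v ∈ V satisfies B(v,v) = 0 and S_F(v,v) = 0, then v is a scalar multiple of ℓ. (This is the algebraic content of footnote 13: a null covector whose mixed invariant with a type N field strength vanishes must be proportional to the multiple null direction ℓ.) -/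
open scoped BigOperators

section Helpers

variable {V : Type*} [AddCommGroup V] [Module ℝ V] {n : ℕ}

lemma epsSign_mul_self (a : Fin n) : epsSign a * epsSign a = 1 := by
  unfold epsSign; split <;> norm_num

lemma epsSign_of_ne_zero [NeZero n] {a : Fin n} (h : a ≠ 0) : epsSign a = 1 := by
  unfold epsSign
  rw [if_neg]
  exact fun h' => h (Fin.ext (by simp [h']))

lemma lorentz_expand (B : V →ₗ[ℝ] V →ₗ[ℝ] ℝ) (e : Module.Basis (Fin n) ℝ V)
    (he : IsLorentzBasis B e) (x y : V) :
    B x y = ∑ a : Fin n, epsSign a * (e.repr x a * e.repr y a) := by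
  replace he : ∀ a b : Fin n, B (e a) (e b) = if a = b then epsSign a else 0 := he
  conv_lhs => rw [← e.sum_repr x]
  rw [map_sum, LinearMap.sum_apply]
  refine Finset.sum_congr rfl fun a _ => ?_
  rw [map_smul, LinearMap.smul_apply, smul_eq_mul]
  conv_lhs => rw [← e.sum_repr y]
  rw [map_sum]
  simp only [map_smul, smul_eq_mul, he, mul_ite, mul_zero, Finset.sum_ite_eq, Finset.mem_univ,
    if_true]
  ring

lemma lorentz_symm (B : V →ₗ[ℝ] V →ₗ[ℝ] ℝ) (e : Module.Basis (Fin n) ℝ V)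
    (he : IsLorentzBasis B e) (x y : V) : B x y = B y x := by
  rw [lorentz_expand B e he x y, lorentz_expand B e he y x]
  exact Finset.sum_congr rfl fun a _ => by ring

lemma lorentz_split [NeZero n] (B : V →ₗ[ℝ] V →ₗ[ℝ] ℝ) (e : Module.Basis (Fin n) ℝ V)
    (he : IsLorentzBasis B e) (x y : V) :
    B x y = -(e.repr x 0 * e.repr y 0) +
      ∑ a ∈ Finset.univ.erase (0 : Fin n), e.repr x a * e.repr y a := by
  rw [lorentz_expand B e he x y,
    ← Finset.add_sum_erase _ _ (Finset.mem_univ (0 : Fin n))]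
  congr 1
  · simp [epsSign]
  · refine Finset.sum_congr rfl fun a ha => ?_
    rw [epsSign_of_ne_zero (Finset.mem_erase.mp ha).1, one_mul]

lemma pos_of_orthogonal_timelike (B : V →ₗ[ℝ] V →ₗ[ℝ] ℝ) (e : Module.Basis (Fin n) ℝ V)
    (he : IsLorentzBasis B e) {s w : V}
    (hs : B s s < 0) (hsw : B s w = 0) (hw : w ≠ 0) : 0 < B w w := by
  classical
  haveI : NeZero n := by
    constructor; rintro rfl
    rw [lorentz_expand B e he] at hs; simp at hs
  set sa : Fin n → ℝ := fun a => e.repr s a with hsa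
  set wa : Fin n → ℝ := fun a => e.repr w a with hwa
  set U : Finset (Fin n) := Finset.univ.erase 0 with hU
  set A := ∑ a ∈ U, sa a * sa a with hA
  set Cc := ∑ a ∈ U, sa a * wa a with hCc
  set D := ∑ a ∈ U, wa a * wa a with hD
  have hss : -(sa 0 * sa 0) + A < 0 := by
    rw [← lorentz_split B e he s s]; exact hs
  have hsw2 : -(sa 0 * wa 0) + Cc = 0 := by
    rw [← lorentz_split B e he s w]; exact hsw
  have hAnn : 0 ≤ A := Finset.sum_nonneg fun a _ => mul_self_nonneg _
  have hs0 : 0 < sa 0 * sa 0 := by nlinarith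
  have hDnn : 0 ≤ D := Finset.sum_nonneg fun a _ => mul_self_nonneg _
  have hDpos : 0 < D := by
    rcases lt_or_eq_of_le hDnn with h | h
    · exact h
    have hzero : ∀ a ∈ U, wa a = 0 := by
      intro a ha
      have := (Finset.sum_eq_zero_iff_of_nonneg (fun a _ => mul_self_nonneg (wa a))).mp h.symm a ha
      exact mul_self_eq_zero.mp this
    have hC0 : Cc = 0 := Finset.sum_eq_zero fun a ha => by rw [hzero a ha, mul_zero]
    have hw0 : wa 0 = 0 := by
      have : sa 0 * wa 0 = 0 := by rw [hC0] at hsw2; linarith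
      rcases mul_eq_zero.mp this with h' | h'
      · exact absurd h' (fun hh => by rw [hh] at hs0; simp at hs0)
      · exact h'
    exfalso
    apply hw
    apply (LinearEquiv.map_eq_zero_iff e.repr).mp
    ext a
    by_cases h0 : a = 0
    · subst h0; exact hw0
    · exact hzero a (Finset.mem_erase.mpr ⟨h0, Finset.mem_univ a⟩)
  have hCS : Cc ^ 2 ≤ A * D := by
    have := Finset.sum_mul_sq_le_sq_mul_sq U sa wa
    calc Cc ^ 2 = (∑ a ∈ U, sa a * wa a) ^ 2 := by rw [hCc]
      _ ≤ (∑ a ∈ U, sa a ^ 2) * ∑ a ∈ U, wa a ^ 2 := this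
      _ = A * D := by
          rw [hA, hD]
          congr 1 <;> exact Finset.sum_congr rfl fun a _ => pow_two _
  have hCeq : Cc = sa 0 * wa 0 := by linarith
  rw [lorentz_split B e he w w]
  have hgoal : -((e.repr w) 0 * (e.repr w) 0) +
      ∑ a ∈ Finset.univ.erase (0 : Fin n), (e.repr w) a * (e.repr w) a = -(wa 0 * wa 0) + D := rfl
  rw [hgoal]
  have hP1 : 0 < (sa 0 * sa 0 - A) * D := mul_pos (by linarith) hDpos
  have hC2 : (sa 0 * wa 0) ^ 2 ≤ A * D := by rw [← hCeq]; exact hCS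
  nlinarith [hP1, hC2, hs0]

end Helpers

section Invariance

open Matrix

variable {V : Type*} [AddCommGroup V] [Module ℝ V] {n : ℕ}

lemma sum_eps_bilin (B : V →ₗ[ℝ] V →ₗ[ℝ] ℝ) (e f : Module.Basis (Fin n) ℝ V)
    (he : IsLorentzBasis B e) (hf : IsLorentzBasis B f) (Φ : V →ₗ[ℝ] V →ₗ[ℝ] ℝ) :
    ∑ b : Fin n, epsSign b * Φ (f b) (f b) = ∑ a : Fin n, epsSign a * Φ (e a) (e a) := by
  classical
  replace hf : ∀ a b : Fin n, B (f a) (f b) = if a = b then epsSign a else 0 := hf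
  set C : Matrix (Fin n) (Fin n) ℝ := Matrix.of fun b a => e.repr (f b) a with hCdef
  set E : Matrix (Fin n) (Fin n) ℝ := Matrix.diagonal epsSign with hEdef
  have hEE : E * E = 1 := by
    rw [hEdef, Matrix.diagonal_mul_diagonal]
    have : (fun a : Fin n => epsSign a * epsSign a) = fun _ => (1 : ℝ) := by
      funext a; exact epsSign_mul_self a
    rw [this, Matrix.diagonal_one]
  have hΦexp : ∀ b b' : Fin n,
      Φ (f b) (f b') = ∑ a : Fin n, ∑ a' : Fin n, C b a * (C b' a' * Φ (e a) (e a')) := by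
    intro b b'
    conv_lhs => rw [← e.sum_repr (f b), ← e.sum_repr (f b')]
    simp only [_root_.map_sum, LinearMap.sum_apply, Finset.mul_sum, Finset.sum_mul]
    rw [Finset.sum_comm]
    refine Finset.sum_congr rfl fun a _ => Finset.sum_congr rfl fun a' _ => ?_
    simp only [LinearMap.map_smul, LinearMap.smul_apply, smul_eq_mul, hCdef, Matrix.of_apply]
    try ring
  have hCEC : C * E * Cᵀ = E := by
    ext b b'
    have lhs_eq : (C * E * Cᵀ) b b' = ∑ a, C b a * epsSign a * C b' a := by
      rw [Matrix.mul_apply]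
      refine Finset.sum_congr rfl fun a _ => ?_
      rw [Matrix.mul_diagonal, Matrix.transpose_apply]
    have h1 : B (f b) (f b') = ∑ a, epsSign a * (e.repr (f b) a * e.repr (f b') a) :=
      lorentz_expand B e he _ _
    rw [hf] at h1
    rw [lhs_eq, hEdef, Matrix.diagonal_apply, h1]
    exact Finset.sum_congr rfl fun a _ => by simp only [hCdef, Matrix.of_apply]; ring
  have h1 : C * (E * Cᵀ * E) = 1 := by
    calc C * (E * Cᵀ * E) = C * E * Cᵀ * E := by rw [← Matrix.mul_assoc, ← Matrix.mul_assoc]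
    _ = E * E := by rw [hCEC]
    _ = 1 := hEE
  have h2 : (E * Cᵀ * E) * C = 1 := mul_eq_one_comm.mp h1
  have hCtEC : Cᵀ * E * C = E := by
    have h3 : E * ((E * Cᵀ * E) * C) = E * 1 := by rw [h2]
    simpa only [← Matrix.mul_assoc, hEE, Matrix.one_mul, Matrix.mul_one] using h3
  have hentry : ∀ a a' : Fin n, (Cᵀ * E * C) a a' = ∑ b, epsSign b * (C b a * C b a') := by
    intro a a'
    rw [Matrix.mul_apply]
    refine Finset.sum_congr rfl fun b _ => ?_
    rw [Matrix.mul_diagonal, Matrix.transpose_apply]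
    ring
  calc ∑ b, epsSign b * Φ (f b) (f b)
      = ∑ b, ∑ a, ∑ a', epsSign b * (C b a * (C b a' * Φ (e a) (e a'))) := by
        refine Finset.sum_congr rfl fun b _ => ?_
        rw [hΦexp b b, Finset.mul_sum]
        exact Finset.sum_congr rfl fun a _ => by rw [Finset.mul_sum]
    _ = ∑ a, ∑ a', (∑ b, epsSign b * (C b a * C b a')) * Φ (e a) (e a') := by
        rw [Finset.sum_comm]
        refine Finset.sum_congr rfl fun a _ => ?_
        rw [Finset.sum_comm]
        refine Finset.sum_congr rfl fun a' _ => ?_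
        rw [Finset.sum_mul]
        exact Finset.sum_congr rfl fun b _ => by ring
    _ = ∑ a, ∑ a', E a a' * Φ (e a) (e a') := by
        refine Finset.sum_congr rfl fun a _ => Finset.sum_congr rfl fun a' _ => ?_
        rw [← hentry, hCtEC]
    _ = ∑ a, epsSign a * Φ (e a) (e a) := by
        refine Finset.sum_congr rfl fun a _ => ?_
        simp [hEdef, Matrix.diagonal_apply, ite_mul, zero_mul, Finset.sum_ite_eq]

noncomputable def contraSum (e : Module.Basis (Fin n) ℝ V) (p : ℕ)
    (G H : MultilinearMap ℝ (fun _ : Fin p => V) ℝ) : ℝ :=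
  ∑ a : Fin p → Fin n, (∏ i, epsSign (a i)) * (G (fun i => e (a i)) * H (fun i => e (a i)))

lemma contraSum_apply (e : Module.Basis (Fin n) ℝ V) (p : ℕ)
    (G H : MultilinearMap ℝ (fun _ : Fin p => V) ℝ) :
    contraSum e p G H =
      ∑ a : Fin p → Fin n, (∏ i, epsSign (a i)) *
        (G (fun i => e (a i)) * H (fun i => e (a i))) := rfl

lemma contraSum_add_left (e : Module.Basis (Fin n) ℝ V) (p : ℕ)
    (G G' H : MultilinearMap ℝ (fun _ : Fin p => V) ℝ) :
    contraSum e p (G + G') H = contraSum e p G H + contraSum e p G' H := by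
  simp only [contraSum, MultilinearMap.add_apply, ← Finset.sum_add_distrib]
  exact Finset.sum_congr rfl fun a _ => by ring

lemma contraSum_smul_left (e : Module.Basis (Fin n) ℝ V) (p : ℕ) (c : ℝ)
    (G H : MultilinearMap ℝ (fun _ : Fin p => V) ℝ) :
    contraSum e p (c • G) H = c * contraSum e p G H := by
  simp only [contraSum, MultilinearMap.smul_apply, smul_eq_mul, Finset.mul_sum]
  exact Finset.sum_congr rfl fun a _ => by ring

lemma contraSum_add_right (e : Module.Basis (Fin n) ℝ V) (p : ℕ)
    (G H H' : MultilinearMap ℝ (fun _ : Fin p => V) ℝ) :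
    contraSum e p G (H + H') = contraSum e p G H + contraSum e p G H' := by
  simp only [contraSum, MultilinearMap.add_apply, ← Finset.sum_add_distrib]
  exact Finset.sum_congr rfl fun a _ => by ring

lemma contraSum_smul_right (e : Module.Basis (Fin n) ℝ V) (p : ℕ) (c : ℝ)
    (G H : MultilinearMap ℝ (fun _ : Fin p => V) ℝ) :
    contraSum e p G (c • H) = c * contraSum e p G H := by
  simp only [contraSum, MultilinearMap.smul_apply, smul_eq_mul, Finset.mul_sum]
  exact Finset.sum_congr rfl fun a _ => by ring

lemma contraSum_invariant (B : V →ₗ[ℝ] V →ₗ[ℝ] ℝ) (e f : Module.Basis (Fin n) ℝ V)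
    (he : IsLorentzBasis B e) (hf : IsLorentzBasis B f) :
    ∀ (p : ℕ) (G H : MultilinearMap ℝ (fun _ : Fin p => V) ℝ),
      contraSum e p G H = contraSum f p G H := by
  intro p
  induction p with
  | zero =>
    intro G H
    simp only [contraSum]
    refine Finset.sum_congr rfl fun a _ => ?_
    have h1 : (fun i : Fin 0 => e (a i)) = (fun i : Fin 0 => f (a i)) := by
      funext i; exact i.elim0
    rw [h1]
  | succ p ih =>
    intro G H
    have comp_cons : ∀ (g : Module.Basis (Fin n) ℝ V) (a₀ : Fin n) (t : Fin p → Fin n),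
        (fun i : Fin (p+1) => g ((Fin.cons a₀ t : Fin (p+1) → Fin n) i)) =
          Fin.cons (g a₀) (fun i => g (t i)) := by
      intro g a₀ t
      exact Fin.comp_cons (⇑g) a₀ t
    have key : ∀ (g : Module.Basis (Fin n) ℝ V), contraSum g (p+1) G H
        = ∑ a₀ : Fin n, epsSign a₀ *
            contraSum g p (G.curryLeft (g a₀)) (H.curryLeft (g a₀)) := by
      intro g
      rw [contraSum_apply,
        ← Equiv.sum_comp (Fin.consEquiv (fun _ : Fin (p+1) => Fin n))
          (fun a : Fin (p+1) → Fin n => (∏ i, epsSign (a i)) *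
            (G (fun i => g (a i)) * H (fun i => g (a i)))),
        Fintype.sum_prod_type]
      refine Finset.sum_congr rfl fun a₀ _ => ?_
      rw [contraSum_apply, Finset.mul_sum]
      refine Finset.sum_congr rfl fun t _ => ?_
      have hc : (Fin.consEquiv (fun _ : Fin (p+1) => Fin n)) (a₀, t) = Fin.cons a₀ t := rfl
      rw [hc, comp_cons g a₀ t, Fin.prod_univ_succ]
      simp only [Fin.cons_zero, Fin.cons_succ, MultilinearMap.curryLeft_apply]
      ring
    rw [key e, key f]
    set Φ : V →ₗ[ℝ] V →ₗ[ℝ] ℝ := LinearMap.mk₂ ℝ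
      (fun x y => contraSum f p (G.curryLeft x) (H.curryLeft y))
      (fun x x' y => by
        show contraSum f p (G.curryLeft (x + x')) (H.curryLeft y) =
          contraSum f p (G.curryLeft x) (H.curryLeft y) +
            contraSum f p (G.curryLeft x') (H.curryLeft y)
        rw [LinearMap.map_add, contraSum_add_left])
      (fun c x y => by
        show contraSum f p (G.curryLeft (c • x)) (H.curryLeft y) =
          c • contraSum f p (G.curryLeft x) (H.curryLeft y)
        rw [LinearMap.map_smul, contraSum_smul_left, smul_eq_mul])
      (fun x y y' => by
        show contraSum f p (G.curryLeft x) (H.curryLeft (y + y')) =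
          contraSum f p (G.curryLeft x) (H.curryLeft y) +
            contraSum f p (G.curryLeft x) (H.curryLeft y')
        rw [LinearMap.map_add, contraSum_add_right])
      (fun c x y => by
        show contraSum f p (G.curryLeft x) (H.curryLeft (c • y)) =
          c • contraSum f p (G.curryLeft x) (H.curryLeft y)
        rw [LinearMap.map_smul, contraSum_smul_right, smul_eq_mul]) with hΦdef
    have hΦapp : ∀ x y : V, Φ x y = contraSum f p (G.curryLeft x) (H.curryLeft y) :=
      fun x y => rfl
    calc ∑ a₀ : Fin n, epsSign a₀ * contraSum e p (G.curryLeft (e a₀)) (H.curryLeft (e a₀))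
        = ∑ a₀ : Fin n, epsSign a₀ * Φ (e a₀) (e a₀) := by
          refine Finset.sum_congr rfl fun a _ => ?_
          rw [ih, hΦapp]
      _ = ∑ b : Fin n, epsSign b * Φ (f b) (f b) := (sum_eps_bilin B e f he hf Φ).symm
      _ = ∑ b : Fin n, epsSign b * contraSum f p (G.curryLeft (f b)) (H.curryLeft (f b)) := by
          refine Finset.sum_congr rfl fun b _ => ?_
          rw [hΦapp]

end Invariance

/-- footnote 13: if `F` is a nonzero type N `(p+1)`-form (i.e. a `p`-form
with `p ≥ 1`, written here with arity `p + 1`, `p + 1 ≤ n − 1`) with multiple null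
direction `ℓ ≠ 0`, and `v` is a null vector whose mixed invariant
`S_F(v,v) = Σ ε_{a₁}⋯ε_{a_p} F(v, e_{a₁},…,e_{a_p})²` vanishes, then `v ∝ ℓ`. -/
theorem null_vector_with_vanishing_mixed_invariant_is_aligned {V : Type*}
    [AddCommGroup V] [Module ℝ V] [FiniteDimensional ℝ V] {n : ℕ}
    (B : V →ₗ[ℝ] V →ₗ[ℝ] ℝ)
    (e : Module.Basis (Fin n) ℝ V) (he : IsLorentzBasis B e)
    {p : ℕ} (hpn : p + 1 ≤ n - 1)
    (F : AlternatingMap ℝ V ℝ (Fin (p + 1))) (hF : F ≠ 0)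
    {ℓ : V} (hℓ : ℓ ≠ 0) (hN : TypeN B F ℓ)
    (v : V) (hv : B v v = 0)
    (hS : ∑ a : Fin p → Fin n, (∏ i : Fin p, epsSign (a i)) *
        (F (Fin.cons v (fun i => e (a i)))) ^ 2 = 0) :
    ∃ c : ℝ, v = c • ℓ := by
  classical
  obtain ⟨hIota, hWedge⟩ := hN
  have hn2 : 2 ≤ n := by omega
  haveI : NeZero n := ⟨by omega⟩
  have hsymm : ∀ x y : V, B x y = B y x := lorentz_symm B e he
  -- a tuple where F does not vanish
  obtain ⟨w₀, hw₀⟩ : ∃ w : Fin (p+1) → V, F w ≠ 0 := by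
    by_contra h
    push_neg at h
    exact hF (AlternatingMap.ext fun w => by rw [h w]; rfl)
  -- composing a cons tuple with succAbove of a successor index
  have hconsSA : ∀ (x : V) (w : Fin (p+1) → V) (j : Fin (p+1)),
      (Fin.cons x w : Fin (p+2) → V) ∘ (Fin.succ j).succAbove
        = Fin.cons x (w ∘ j.succAbove) := by
    intro x w j
    funext i
    refine Fin.cases ?_ (fun k => ?_) i
    · simp [Fin.succ_succAbove_zero]
    · simp [Fin.succ_succAbove_succ]
  have hcons0 : ∀ (x : V) (w : Fin (p+1) → V),
      (Fin.cons x w : Fin (p+2) → V) ∘ (0 : Fin (p+2)).succAbove = w := by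
    intro x w; funext k; simp
  have hwedge_key : ∀ (x : V) (w : Fin (p+1) → V),
      B ℓ x * F w + ∑ j : Fin (p+1),
        (-1:ℝ) ^ ((j:ℕ)+1) * B ℓ (w j) * F (Fin.cons x (w ∘ j.succAbove)) = 0 := by
    intro x w
    have hthis := hWedge (Fin.cons x w)
    rw [Fin.sum_univ_succ] at hthis
    simp only [hconsSA, hcons0, Fin.cons_zero, Fin.cons_succ, Fin.val_zero, pow_zero, one_mul,
      Fin.val_succ] at hthis
    exact hthis
  have hℓℓ : B ℓ ℓ = 0 := by
    have hthis := hwedge_key ℓ w₀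
    have hz : ∀ j : Fin (p+1), F (Fin.cons ℓ (w₀ ∘ j.succAbove)) = 0 := fun j =>
      hIota _ ⟨0, Fin.cons_zero _ _⟩
    simp only [hz, mul_zero, Finset.sum_const_zero, add_zero] at hthis
    exact (mul_eq_zero.mp hthis).resolve_right hw₀
  -- main step : B ℓ v = 0
  have hc : B ℓ v = 0 := by
    by_contra hc
    set G : MultilinearMap ℝ (fun _ : Fin p => V) ℝ := F.toMultilinearMap.curryLeft v with hGdef
    have hGapp : ∀ m : Fin p → V, G m = F (Fin.cons v m) := fun m => rfl
    have hGℓ : ∀ (m : Fin p → V) (i : Fin p), m i = ℓ → G m = 0 := by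
      intro m i hi
      rw [hGapp]
      exact hIota _ ⟨i.succ, by simp [hi]⟩
    have hGv : ∀ (m : Fin p → V) (i : Fin p), m i = v → G m = 0 := by
      intro m i hi
      rw [hGapp]
      exact F.map_eq_zero_of_eq _ (i := 0) (j := i.succ) (by simp [hi])
        (Ne.symm (Fin.succ_ne_zero i))
    have hGspan' : ∀ x ∈ Submodule.span ℝ ({ℓ, v} : Set V), ∀ (m : Fin p → V) (i : Fin p),
        G (Function.update m i x) = 0 := by
      intro x hx
      induction hx using Submodule.span_induction with
      | mem x hmem =>
        intro m i
        rcases Set.mem_insert_iff.mp hmem with h | h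
        · exact hGℓ _ i (by rw [Function.update_self, h])
        · rw [Set.mem_singleton_iff] at h
          exact hGv _ i (by rw [Function.update_self, h])
      | zero =>
        intro m i
        exact G.map_update_zero m i
      | add x y hx hy ihx ihy =>
        intro m i
        rw [G.map_update_add, ihx m i, ihy m i, add_zero]
      | smul c x hx ihx =>
        intro m i
        rw [G.map_update_smul, ihx m i, smul_zero]
    have hGspan : ∀ (m : Fin p → V) (i : Fin p),
        m i ∈ Submodule.span ℝ ({ℓ, v} : Set V) → G m = 0 := by
      intro m i him
      rw [← Function.update_eq_self i m]
      exact hGspan' _ him m i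
    -- the adapted null pair
    set u : V := (B ℓ v)⁻¹ • v with hudef
    have hBℓu : B ℓ u = 1 := by
      rw [hudef, LinearMap.map_smul, smul_eq_mul, inv_mul_cancel₀ hc]
    have hBuℓ : B u ℓ = 1 := by rw [← hsymm]; exact hBℓu
    have hBuu : B u u = 0 := by
      rw [hudef]
      simp only [LinearMap.map_smul, LinearMap.smul_apply, smul_eq_mul, hv, mul_zero]
    have hsqrt2 : Real.sqrt 2 * Real.sqrt 2 = 2 := Real.mul_self_sqrt (by norm_num)
    have hs2ne : Real.sqrt 2 ≠ 0 := by positivity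
    set s : V := (Real.sqrt 2)⁻¹ • (ℓ - u) with hsdef
    set t : V := (Real.sqrt 2)⁻¹ • (ℓ + u) with htdef
    have hBexp : ∀ (a b : ℝ) (x y : V), B (a • x) (b • y) = a * b * B x y := by
      intro a b x y
      simp only [LinearMap.map_smul, LinearMap.smul_apply, smul_eq_mul]
      ring
    have hinv2 : (Real.sqrt 2)⁻¹ * (Real.sqrt 2)⁻¹ = 1/2 := by
      rw [← mul_inv, hsqrt2]
      norm_num
    have hss : B s s = -1 := by
      rw [hsdef, hBexp, hinv2]
      simp only [map_sub, LinearMap.sub_apply, hℓℓ, hBℓu, hBuℓ, hBuu]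
      ring
    have htt : B t t = 1 := by
      rw [htdef, hBexp, hinv2]
      simp only [map_add, LinearMap.add_apply, hℓℓ, hBℓu, hBuℓ, hBuu]
      ring
    have hst : B s t = 0 := by
      rw [hsdef, htdef, hBexp, hinv2]
      simp only [map_sub, map_add, LinearMap.sub_apply, LinearMap.add_apply,
        hℓℓ, hBℓu, hBuℓ, hBuu]
      ring
    have hts : B t s = 0 := by rw [← hsymm]; exact hst
    -- the orthogonal complement of span {s, t}
    set U : Submodule ℝ V := LinearMap.ker (B s) ⊓ LinearMap.ker (B t) with hUdef
    have hposU : ∀ x ∈ U, x ≠ 0 → 0 < B x x := by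
      intro x hx hx0
      refine pos_of_orthogonal_timelike B e he (s := s) (by rw [hss]; norm_num) ?_ hx0
      exact LinearMap.mem_ker.mp (Submodule.mem_inf.mp hx).1
    haveI : Invertible (2:ℝ) := invertibleOfNonzero two_ne_zero
    have hBrsymm : (LinearMap.BilinForm.restrict B U).IsSymm := by
      refine LinearMap.BilinForm.isSymm_def.mpr fun x y => ?_
      simp only [LinearMap.BilinForm.restrict_apply, RingHom.id_apply]
      exact hsymm _ _
    obtain ⟨ub, hub⟩ := LinearMap.BilinForm.exists_orthogonal_basis (LinearMap.BilinForm.isSymm_iff.mp hBrsymm)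
    have hubV : ∀ k k' : Fin (Module.finrank ℝ U), k ≠ k' → B ((ub k : V)) ((ub k' : V)) = 0 := by
      intro k k' hkk'
      have := LinearMap.isOrthoᵢ_def.mp hub k k' hkk'
      simpa only [LinearMap.BilinForm.restrict_apply, LinearMap.domRestrict₁₂_apply,
        LinearMap.domRestrict_apply] using this
    have hqpos : ∀ k : Fin (Module.finrank ℝ U), 0 < B (ub k : V) (ub k : V) := by
      intro k
      refine hposU _ (ub k).2 ?_
      intro h
      exact Module.Basis.ne_zero ub k (Subtype.ext h)
    set w : Fin (Module.finrank ℝ U) → V := fun k => (Real.sqrt (B (ub k : V) (ub k : V)))⁻¹ • (ub k : V)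
      with hwdef
    have hsqq : ∀ k, Real.sqrt (B (ub k : V) (ub k : V)) *
        Real.sqrt (B (ub k : V) (ub k : V)) = B (ub k : V) (ub k : V) := fun k =>
      Real.mul_self_sqrt (le_of_lt (hqpos k))
    have hsqne : ∀ k, Real.sqrt (B (ub k : V) (ub k : V)) ≠ 0 := fun k =>
      ne_of_gt (Real.sqrt_pos.mpr (hqpos k))
    have hww : ∀ k k' : Fin (Module.finrank ℝ U), B (w k) (w k') = if k = k' then 1 else 0 := by
      intro k k'
      by_cases hkk' : k = k'
      · subst hkk'
        rw [if_pos rfl, hwdef, hBexp, ← mul_inv, hsqq k,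
          inv_mul_cancel₀ (ne_of_gt (hqpos k))]
      · rw [if_neg hkk', hwdef, hBexp, hubV k k' hkk', mul_zero]
    have hsw : ∀ k, B s (w k) = 0 := by
      intro k
      have hker : B s (ub k : V) = 0 :=
        LinearMap.mem_ker.mp (Submodule.mem_inf.mp (ub k).2).1
      rw [hwdef]
      simp only [LinearMap.map_smul, smul_eq_mul, hker, mul_zero]
    have htw : ∀ k, B t (w k) = 0 := by
      intro k
      have hker : B t (ub k : V) = 0 :=
        LinearMap.mem_ker.mp (Submodule.mem_inf.mp (ub k).2).2
      rw [hwdef]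
      simp only [LinearMap.map_smul, smul_eq_mul, hker, mul_zero]
    have hws : ∀ k, B (w k) s = 0 := fun k => by rw [← hsymm]; exact hsw k
    have hwt : ∀ k, B (w k) t = 0 := fun k => by rw [← hsymm]; exact htw k
    set g : (Fin 2 ⊕ Fin (Module.finrank ℝ U)) → V := Sum.elim ![s, t] w with hgdef
    have hgortho : ∀ i j, B (g i) (g j) =
        if i = j then (if i = Sum.inl 0 then (-1:ℝ) else 1) else 0 := by
      rintro (i | k) (j | k')
      · fin_cases i <;> fin_cases j <;>
          simp [hgdef, hss, hst, hts, htt]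
      · fin_cases i <;> simp [hgdef, hsw, htw]
      · fin_cases j <;> simp [hgdef, hws, hwt]
      · simp only [hgdef, Sum.elim_inr, hww]
        by_cases h : k = k'
        · subst h; simp
        · simp [h]
    have hindep : LinearIndependent ℝ g := by
      refine LinearMap.linearIndependent_of_isOrthoᵢ
        (LinearMap.isOrthoᵢ_def.mpr fun i j hij => by rw [hgortho, if_neg hij]) ?_
      intro i h
      have h' : B (g i) (g i) = 0 := h
      rw [hgortho, if_pos rfl] at h'
      split_ifs at h' <;> norm_num at h'
    have hspan : ⊤ ≤ Submodule.span ℝ (Set.range g) := by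
      intro x _
      have hx'1 : B s (x + (B s x) • s - (B t x) • t) = 0 := by
        simp only [map_add, map_sub, LinearMap.map_smul, smul_eq_mul, hss, hst]
        ring
      have hx'2 : B t (x + (B s x) • s - (B t x) • t) = 0 := by
        simp only [map_add, map_sub, LinearMap.map_smul, smul_eq_mul, hts, htt]
        ring
      have hx' : x + (B s x) • s - (B t x) • t ∈ U :=
        Submodule.mem_inf.mpr ⟨LinearMap.mem_ker.mpr hx'1, LinearMap.mem_ker.mpr hx'2⟩
      have hUspan : ∀ y ∈ U, y ∈ Submodule.span ℝ (Set.range g) := by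
        intro y hy
        have h1 : (⟨y, hy⟩ : U) ∈ Submodule.span ℝ (Set.range ub) := ub.mem_span _
        have h2 : y ∈ Submodule.map U.subtype (Submodule.span ℝ (Set.range ub)) :=
          ⟨⟨y, hy⟩, h1, rfl⟩
        rw [Submodule.map_span] at h2
        have h3 : (U.subtype '' Set.range ub : Set V) ⊆
            ↑(Submodule.span ℝ (Set.range g)) := by
          rintro z ⟨z', ⟨k, rfl⟩, rfl⟩
          have hz : Real.sqrt (B (ub k : V) (ub k : V)) • w k = U.subtype (ub k) := by
            rw [hwdef, smul_smul, mul_inv_cancel₀ (hsqne k), one_smul]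
            rfl
          rw [← hz]
          exact Submodule.smul_mem _ _ (Submodule.subset_span ⟨Sum.inr k, rfl⟩)
        exact Submodule.span_le.mpr h3 h2
      have hsmem : s ∈ Submodule.span ℝ (Set.range g) :=
        Submodule.subset_span ⟨Sum.inl 0, rfl⟩
      have htmem : t ∈ Submodule.span ℝ (Set.range g) :=
        Submodule.subset_span ⟨Sum.inl 1, rfl⟩
      have hxx : x = (x + (B s x) • s - (B t x) • t) - (B s x) • s + (B t x) • t := by
        abel
      rw [hxx]
      exact Submodule.add_mem _
        (Submodule.sub_mem _ (hUspan _ hx') (Submodule.smul_mem _ _ hsmem))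
        (Submodule.smul_mem _ _ htmem)
    set bC : Module.Basis (Fin 2 ⊕ Fin (Module.finrank ℝ U)) ℝ V := Module.Basis.mk hindep hspan with hbCdef
    have hcard : 2 + Module.finrank ℝ U = n := by
      have h1 := Module.finrank_eq_card_basis bC
      have h2 := Module.finrank_eq_card_basis e
      rw [Fintype.card_sum, Fintype.card_fin, Fintype.card_fin] at h1
      rw [Fintype.card_fin] at h2
      omega
    set σ : (Fin 2 ⊕ Fin (Module.finrank ℝ U)) ≃ Fin n := finSumFinEquiv.trans (finCongr hcard) with hσdef
    set f : Module.Basis (Fin n) ℝ V := bC.reindex σ with hfdef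
    have hfapp : ∀ a, f a = g (σ.symm a) := by
      intro a
      rw [hfdef, Module.Basis.reindex_apply, hbCdef, Module.Basis.mk_apply]
    have hσ0 : σ (Sum.inl 0) = 0 := by
      rw [hσdef]
      apply Fin.ext
      simp [Equiv.trans_apply, finSumFinEquiv_apply_left]
    have hσsymm0 : σ.symm 0 = Sum.inl 0 := by rw [← hσ0, Equiv.symm_apply_apply]
    have hfL : IsLorentzBasis B f := by
      intro a b
      rw [hfapp, hfapp, hgortho]
      by_cases hab : a = b
      · subst hab
        rw [if_pos rfl]
        by_cases h0 : a = 0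
        · subst h0
          rw [if_pos hσsymm0]
          simp [epsSign]
        · rw [if_pos rfl, if_neg, epsSign_of_ne_zero h0]
          intro hcon
          exact h0 (by rw [← Equiv.apply_symm_apply σ a, hcon, hσ0])
      · rw [if_neg (fun hcon => hab (σ.symm.injective hcon)), if_neg hab]
    have hspan_st : ∀ j : Fin 2, (![s, t] j) ∈ Submodule.span ℝ ({ℓ, v} : Set V) := by
      have hℓmem : ℓ ∈ Submodule.span ℝ ({ℓ, v} : Set V) :=
        Submodule.subset_span (Set.mem_insert _ _)
      have hvmem : v ∈ Submodule.span ℝ ({ℓ, v} : Set V) :=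
        Submodule.subset_span (Set.mem_insert_iff.mpr (Or.inr rfl))
      have humem : u ∈ Submodule.span ℝ ({ℓ, v} : Set V) := by
        rw [hudef]; exact Submodule.smul_mem _ _ hvmem
      intro j
      fin_cases j
      · show s ∈ _
        rw [hsdef]
        exact Submodule.smul_mem _ _ (Submodule.sub_mem _ hℓmem humem)
      · show t ∈ _
        rw [htdef]
        exact Submodule.smul_mem _ _ (Submodule.add_mem _ hℓmem humem)
    have hterm0 : ∀ (a : Fin p → Fin n) (i : Fin p) (j : Fin 2),
        σ.symm (a i) = Sum.inl j → G (fun i' => f (a i')) = 0 := by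
      intro a i j hij
      refine hGspan (fun i' => f (a i')) i ?_
      show f (a i) ∈ _
      rw [hfapp, hij]
      exact hspan_st j
    have hprodone : ∀ a : Fin p → Fin n, (∀ (i : Fin p) (j : Fin 2),
        σ.symm (a i) ≠ Sum.inl j) → (∏ i, epsSign (a i)) = 1 := by
      intro a ha
      refine Finset.prod_eq_one fun i _ => ?_
      refine epsSign_of_ne_zero fun h0 => ?_
      exact ha i 0 (by rw [h0, hσsymm0])
    have hcontra_e : contraSum e p G G = 0 := by
      rw [contraSum_apply]
      rw [show ∑ a : Fin p → Fin n, (∏ i, epsSign (a i)) *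
          (G (fun i => e (a i)) * G (fun i => e (a i)))
        = ∑ a : Fin p → Fin n, (∏ i : Fin p, epsSign (a i)) *
          (F (Fin.cons v (fun i => e (a i)))) ^ 2 from
        Finset.sum_congr rfl fun a _ => by rw [hGapp]; ring]
      exact hS
    have hcontra_f : contraSum f p G G = 0 := by
      rw [← contraSum_invariant B e f he hfL p G G]
      exact hcontra_e
    have hnonneg : ∀ a ∈ (Finset.univ : Finset (Fin p → Fin n)),
        0 ≤ (∏ i, epsSign (a i)) * (G (fun i => f (a i)) * G (fun i => f (a i))) := by
      intro a _
      by_cases hcase : ∃ (i : Fin p) (j : Fin 2), σ.symm (a i) = Sum.inl j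
      · obtain ⟨i, j, hij⟩ := hcase
        rw [hterm0 a i j hij]
        simp
      · push_neg at hcase
        rw [hprodone a hcase, one_mul]
        exact mul_self_nonneg _
    have hterms := (Finset.sum_eq_zero_iff_of_nonneg hnonneg).mp
      (by rw [← contraSum_apply]; exact hcontra_f)
    have hGfzero : ∀ a : Fin p → Fin n, G (fun i => f (a i)) = 0 := by
      intro a
      by_cases hcase : ∃ (i : Fin p) (j : Fin 2), σ.symm (a i) = Sum.inl j
      · obtain ⟨i, j, hij⟩ := hcase
        exact hterm0 a i j hij
      · push_neg at hcase
        have hthis := hterms a (Finset.mem_univ a)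
        rw [hprodone a hcase, one_mul] at hthis
        exact mul_self_eq_zero.mp hthis
    have hGzero : ∀ m' : Fin p → V, G m' = 0 := by
      have hG : G = (0 : MultilinearMap ℝ (fun _ : Fin p => V) ℝ) :=
        Module.Basis.ext_multilinear (fun _ => f) fun a => by
          rw [hGfzero a, MultilinearMap.zero_apply]
      intro m'
      rw [hG]
      rfl
    have hFzero : ∀ w' : Fin (p+1) → V, F w' = 0 := by
      intro w'
      have hthis := hwedge_key v w'
      have hz : ∀ j : Fin (p+1), F (Fin.cons v (w' ∘ j.succAbove)) = 0 := fun j => by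
        rw [← hGapp]; exact hGzero _
      simp only [hz, mul_zero, Finset.sum_const_zero, add_zero] at hthis
      exact (mul_eq_zero.mp hthis).resolve_left hc
    exact hF (AlternatingMap.ext fun w' => by rw [hFzero w']; rfl)
  -- finish : v is orthogonal to ℓ, both null, hence proportional
  have hBvℓ : B v ℓ = 0 := by rw [← hsymm]; exact hc
  have hl0 : e.repr ℓ 0 ≠ 0 := by
    intro h0
    apply hℓ
    have hsplit := lorentz_split B e he ℓ ℓ
    rw [hℓℓ, h0] at hsplit
    have hsum : ∑ a ∈ Finset.univ.erase (0:Fin n), e.repr ℓ a * e.repr ℓ a = 0 := by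
      linarith
    have hz : ∀ a ∈ Finset.univ.erase (0:Fin n), e.repr ℓ a = 0 := fun a ha =>
      mul_self_eq_zero.mp ((Finset.sum_eq_zero_iff_of_nonneg
        (fun a _ => mul_self_nonneg _)).mp hsum a ha)
    apply (LinearEquiv.map_eq_zero_iff e.repr).mp
    ext a
    by_cases ha : a = 0
    · subst ha; exact h0
    · exact hz a (Finset.mem_erase.mpr ⟨ha, Finset.mem_univ a⟩)
  set z : V := e.repr ℓ 0 • v - e.repr v 0 • ℓ with hzdef
  have hBzz : B z z = 0 := by
    rw [hzdef]
    simp only [map_sub, LinearMap.map_smul, LinearMap.sub_apply, LinearMap.smul_apply,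
      smul_eq_mul, hv, hℓℓ, hc, hBvℓ]
    ring
  have hz0 : e.repr z 0 = 0 := by
    rw [hzdef]
    simp only [map_sub, map_smul, Finsupp.sub_apply, Finsupp.smul_apply, smul_eq_mul]
    ring
  have hzzero : z = 0 := by
    have hsplit := lorentz_split B e he z z
    rw [hBzz, hz0] at hsplit
    have hsum : ∑ a ∈ Finset.univ.erase (0:Fin n), e.repr z a * e.repr z a = 0 := by
      linarith
    have hz' : ∀ a ∈ Finset.univ.erase (0:Fin n), e.repr z a = 0 := fun a ha =>
      mul_self_eq_zero.mp ((Finset.sum_eq_zero_iff_of_nonneg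
        (fun a _ => mul_self_nonneg _)).mp hsum a ha)
    apply (LinearEquiv.map_eq_zero_iff e.repr).mp
    ext a
    by_cases ha : a = 0
    · subst ha; exact hz0
    · exact hz' a (Finset.mem_erase.mpr ⟨ha, Finset.mem_univ a⟩)
  have hkey : e.repr ℓ 0 • v = e.repr v 0 • ℓ := by
    have hz2 : e.repr ℓ 0 • v - e.repr v 0 • ℓ = 0 := by rw [← hzdef]; exact hzzero
    exact sub_eq_zero.mp hz2
  refine ⟨(e.repr ℓ 0)⁻¹ * e.repr v 0, ?_⟩
  rw [mul_smul, ← hkey, inv_smul_smul₀ hl0]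
end

section
/- Let B be Lorentzian of signature (1, n−1) on V and let F be a p-form on V (1 ≤ p ≤ n−1) of type N with multiple null direction ℓ ≠ 0. Then: (i) for every ε > 0 there exists a pseudo-orthonormal basis (e₀,…,e_{n−1}) of V such that |F(e_{a₁},…,e_{a_p})| < ε for all indices a₁,…,a_p; and (ii) if F ≠ 0, for every M > 0 there exists a pseudo-orthonormal basis such that |F(e_{a₁},…,e_{a_p})| > M for some indices a₁,…,a_p. (This is the zeroth-order case of the ε-property of Remark 1.9: by a suitable boost the components of a type N field strength can be made as small, or as large, as desired.) -/
open scoped BigOperators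

set_option linter.unusedSectionVars false

section AuxCombinatorics
variable {V : Type*} [AddCommGroup V] [Module ℝ V] {q : ℕ}

lemma cons_comp_succ_succAbove (x : V) (v : Fin (q+1) → V) (j : Fin (q+1)) :
    (Fin.cons x v : Fin (q+2) → V) ∘ (Fin.succ j).succAbove
      = Fin.cons x (v ∘ j.succAbove) := by
  funext i
  refine Fin.cases ?_ (fun k => ?_) i
  · simp
  · simp [Fin.succ_succAbove_succ]

lemma cons_removeNth_eq (m : V) (v : Fin (q+1) → V) (j : Fin (q+1)) :
    (Fin.cons m (v ∘ j.succAbove) : Fin (q+1) → V)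
      = (Function.update v j m) ∘ ⇑(Fin.cycleRange j).symm := by
  funext i
  refine Fin.cases ?_ (fun k => ?_) i
  · rw [Function.comp_apply, Fin.cycleRange_symm_zero, Function.update_self, Fin.cons_zero]
  · simp [Fin.cycleRange_symm_succ, Function.update_apply, Fin.succAbove_ne]

lemma sign_lemma (F : AlternatingMap ℝ V ℝ (Fin (q+1))) (m : V) (v : Fin (q+1) → V)
    (j : Fin (q+1)) :
    F (Fin.cons m (v ∘ j.succAbove)) = (-1:ℝ)^(j:ℕ) * F (Function.update v j m) := by
  rw [cons_removeNth_eq, AlternatingMap.map_perm]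
  rw [Equiv.Perm.sign_symm, Fin.sign_cycleRange]
  rcases Nat.even_or_odd (j:ℕ) with h | h
  · simp [h.neg_one_pow, Even.neg_one_pow h]
  · simp [Odd.neg_one_pow h, h.neg_one_pow]

lemma cons_comp_zero_succAbove (x : V) (v : Fin (q+1) → V) :
    (Fin.cons x v : Fin (q+2) → V) ∘ (0 : Fin (q+2)).succAbove = v := by
  funext k; simp [Fin.succAbove_zero]

variable (B : V →ₗ[ℝ] V →ₗ[ℝ] ℝ) (F : AlternatingMap ℝ V ℝ (Fin (q+1))) (ℓ m : V)

lemma master_identity (hw : WedgeFlatZero B F ℓ) (hlm : B ℓ m = 1)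
    (v : Fin (q+1) → V) :
    ∑ j : Fin (q+1), B ℓ (v j) * F (Function.update v j m) = F v := by
  have h := hw (Fin.cons m v)
  rw [Fin.sum_univ_succ] at h
  have hterm : ∀ j : Fin (q+1),
      (-1:ℝ)^(((Fin.succ j) : Fin (q+2)):ℕ) * B ℓ ((Fin.cons m v : Fin (q+2) → V) (Fin.succ j))
        * F ((Fin.cons m v : Fin (q+2) → V) ∘ (Fin.succ j).succAbove)
      = -(B ℓ (v j) * F (Function.update v j m)) := by
    intro j
    rw [Fin.cons_succ, cons_comp_succ_succAbove, sign_lemma, Fin.val_succ, pow_succ]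
    have hsq : ((-1:ℝ))^(j:ℕ) * (-1:ℝ)^(j:ℕ) = 1 := by
      rw [← pow_add]; exact Even.neg_one_pow ⟨(j:ℕ), rfl⟩
    linear_combination (-(B ℓ (v j) * F (Function.update v j m))) * hsq
  simp only [hterm] at h
  rw [Fin.val_zero, pow_zero, one_mul, Fin.cons_zero, cons_comp_zero_succAbove, hlm,
    one_mul, Finset.sum_neg_distrib] at h
  linarith

lemma ell_null (hw : WedgeFlatZero B F ℓ) (hι : IotaZero F ℓ)
    (v : Fin (q+1) → V) (hv : F v ≠ 0) : B ℓ ℓ = 0 := by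
  have h := hw (Fin.cons ℓ v)
  rw [Fin.sum_univ_succ] at h
  have hterm : ∀ j : Fin (q+1),
      (-1:ℝ)^(((Fin.succ j) : Fin (q+2)):ℕ) * B ℓ ((Fin.cons ℓ v : Fin (q+2) → V) (Fin.succ j))
        * F ((Fin.cons ℓ v : Fin (q+2) → V) ∘ (Fin.succ j).succAbove) = 0 := by
    intro j
    rw [cons_comp_succ_succAbove]
    rw [hι _ ⟨0, Fin.cons_zero _ _⟩]
    ring
  simp only [hterm] at h
  rw [Fin.val_zero, pow_zero, one_mul, Fin.cons_zero, cons_comp_zero_succAbove,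
    Finset.sum_const_zero, add_zero] at h
  exact (mul_eq_zero.mp h).resolve_right hv

lemma hybrid_expand (hι : IotaZero F ℓ) (c d : V → ℝ) (k : ℕ) (hk : k ≤ q+1) :
    ∀ v : Fin (q+1) → V,
    F (fun i => if (i:ℕ) < k then (v i + d (v i) • ℓ + c (v i) • m) else v i)
      = F v + ∑ j ∈ Finset.filter (fun j : Fin (q+1) => (j:ℕ) < k) Finset.univ,
          c (v j) * F (Function.update v j m) := by
  induction k with
  | zero => intro v; simp
  | succ k ih =>
    intro v
    have hk' : k ≤ q + 1 := by omega
    set j₀ : Fin (q+1) := ⟨k, by omega⟩ with hj₀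
    set w : Fin (q+1) → V :=
      (fun i => if (i:ℕ) < k then (v i + d (v i) • ℓ + c (v i) • m) else v i) with hw
    have hup : (fun i : Fin (q+1) =>
        if (i:ℕ) < k+1 then (v i + d (v i) • ℓ + c (v i) • m) else v i)
        = Function.update w j₀ (v j₀ + d (v j₀) • ℓ + c (v j₀) • m) := by
      funext i
      rcases eq_or_ne i j₀ with rfl | hi
      · rw [Function.update_self, if_pos (by simp [hj₀])]
      · rw [Function.update_of_ne hi]
        have hne : (i:ℕ) ≠ k := fun h => hi (Fin.ext (by simp [hj₀, h]))
        have hwi : w i = if (i:ℕ) < k then (v i + d (v i) • ℓ + c (v i) • m) else v i := rfl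
        rw [hwi]
        split_ifs with h1 h2 <;> first | rfl | omega
    have hwj : w j₀ = v j₀ := by rw [hw]; simp [hj₀]
    have hupd_self : Function.update w j₀ (v j₀) = w := by
      rw [← hwj, Function.update_eq_self]
    have hell : F (Function.update w j₀ ℓ) = 0 :=
      hι _ ⟨j₀, Function.update_self _ _ _⟩
    have hm : F (Function.update w j₀ m) = F (Function.update v j₀ m) := by
      have hfun : Function.update w j₀ m
          = (fun i : Fin (q+1) => if (i:ℕ) < k
              then ((Function.update v j₀ m) i + d ((Function.update v j₀ m) i) • ℓ
                + c ((Function.update v j₀ m) i) • m)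
              else (Function.update v j₀ m) i) := by
        funext i
        rcases eq_or_ne i j₀ with rfl | hi
        · rw [Function.update_self, if_neg (by simp [hj₀]), Function.update_self]
        · rw [Function.update_of_ne hi, Function.update_of_ne hi]
      rw [hfun, ih hk']
      rw [Finset.sum_eq_zero, add_zero]
      intro j hj
      have hjk : (j:ℕ) < k := (Finset.mem_filter.mp hj).2
      have hjne : j ≠ j₀ := by intro h; rw [h] at hjk; simp [hj₀] at hjk
      have : F (Function.update (Function.update v j₀ m) j m) = 0 := by
        refine F.map_eq_zero_of_eq _ (i := j) (j := j₀) ?_ hjne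
        rw [Function.update_self, Function.update_of_ne (Ne.symm hjne), Function.update_self]
      rw [this, mul_zero]
    have hins : Finset.filter (fun j : Fin (q+1) => (j:ℕ) < k+1) Finset.univ
        = insert j₀ (Finset.filter (fun j : Fin (q+1) => (j:ℕ) < k) Finset.univ) := by
      ext x
      simp only [Finset.mem_filter, Finset.mem_univ, true_and, Finset.mem_insert, Fin.ext_iff,
        hj₀]
      omega
    have hnot : j₀ ∉ Finset.filter (fun j : Fin (q+1) => (j:ℕ) < k) Finset.univ := by
      simp [hj₀]
    rw [hup, F.map_update_add, F.map_update_add, F.map_update_smul, F.map_update_smul,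
      hupd_self, hell, hm, hins, Finset.sum_insert hnot, ih hk' v]
    simp only [smul_eq_mul, smul_zero]
    ring

lemma scaling (hι : IotaZero F ℓ) (hw : WedgeFlatZero B F ℓ) (hlm : B ℓ m = 1)
    (t : ℝ) (v : Fin (q+1) → V) :
    F (fun i => v i + ((Real.exp t - 1) * B m (v i)) • ℓ
        + ((Real.exp (-t) - 1) * B ℓ (v i)) • m)
      = Real.exp (-t) * F v := by
  have h := hybrid_expand F ℓ m hι (fun x => (Real.exp (-t) - 1) * B ℓ x)
    (fun x => (Real.exp t - 1) * B m x) (q+1) le_rfl v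
  simp only [Fin.is_lt, if_true] at h
  rw [Finset.filter_true_of_mem (fun x _ => trivial)] at h
  have h2 : ∑ j : Fin (q+1), (Real.exp (-t) - 1) * B ℓ (v j) * F (Function.update v j m)
      = (Real.exp (-t) - 1) * ∑ j : Fin (q+1), B ℓ (v j) * F (Function.update v j m) := by
    rw [Finset.mul_sum]; exact Finset.sum_congr rfl (fun j _ => by ring)
  rw [h2, master_identity B F ℓ m hw hlm v] at h
  rw [h]; ring
end AuxCombinatorics

section Boost
variable {V : Type*} [AddCommGroup V] [Module ℝ V]
variable (B : V →ₗ[ℝ] V →ₗ[ℝ] ℝ) (ℓ m : V)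

/-- The boost determined by the null pair `ℓ`, `m`. -/
noncomputable def boost (t : ℝ) : V →ₗ[ℝ] V where
  toFun v := v + ((Real.exp t - 1) * B m v) • ℓ + ((Real.exp (-t) - 1) * B ℓ v) • m
  map_add' x y := by
    simp only [map_add]
    module
  map_smul' r x := by
    simp only [map_smul, smul_eq_mul, RingHom.id_apply]
    module

lemma boost_apply (t : ℝ) (v : V) :
    boost B ℓ m t v
      = v + ((Real.exp t - 1) * B m v) • ℓ + ((Real.exp (-t) - 1) * B ℓ v) • m := rfl

lemma boost_ml (hml : B m ℓ = 1) (hmm : B m m = 0) (t : ℝ) (v : V) :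
    B m (boost B ℓ m t v) = Real.exp t * B m v := by
  simp only [boost_apply, map_add, map_smul, smul_eq_mul, hml, hmm]
  ring

lemma boost_ll (hll : B ℓ ℓ = 0) (hlm : B ℓ m = 1) (t : ℝ) (v : V) :
    B ℓ (boost B ℓ m t v) = Real.exp (-t) * B ℓ v := by
  simp only [boost_apply, map_add, map_smul, smul_eq_mul, hll, hlm]
  ring

lemma boost_isometry (hll : B ℓ ℓ = 0) (hlm : B ℓ m = 1) (hml : B m ℓ = 1)
    (hmm : B m m = 0) (hsymm : ∀ x y : V, B x y = B y x) (t : ℝ) (x y : V) :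
    B (boost B ℓ m t x) (boost B ℓ m t y) = B x y := by
  have hE : Real.exp t * Real.exp (-t) = 1 := by rw [← Real.exp_add]; simp
  simp only [boost_apply, map_add, map_smul, smul_eq_mul, LinearMap.add_apply,
    LinearMap.smul_apply]
  rw [hsymm x ℓ, hsymm x m, hll, hlm, hml, hmm]
  linear_combination (B ℓ x * B m y + B ℓ y * B m x) * hE

lemma boost_boost_neg (hll : B ℓ ℓ = 0) (hlm : B ℓ m = 1) (hml : B m ℓ = 1)
    (hmm : B m m = 0) (t : ℝ) (v : V) :
    boost B ℓ m t (boost B ℓ m (-t) v) = v := by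
  have hE : Real.exp t * Real.exp (-t) = 1 := by rw [← Real.exp_add]; simp
  have h1 := boost_ml B ℓ m hml hmm (-t) v
  have h2 := boost_ll B ℓ m hll hlm (-t) v
  simp only [neg_neg] at h2
  rw [boost_apply B ℓ m t, h1, h2, boost_apply]
  match_scalars <;> simp only [Real.exp_neg] <;> field_simp <;> ring

/-- The boost as a linear equivalence. -/
noncomputable def boostEquiv (hll : B ℓ ℓ = 0) (hlm : B ℓ m = 1) (hml : B m ℓ = 1)
    (hmm : B m m = 0) (t : ℝ) : V ≃ₗ[ℝ] V :=
  LinearEquiv.ofLinear (boost B ℓ m t) (boost B ℓ m (-t))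
    (by ext v
        simp only [LinearMap.coe_comp, Function.comp_apply, LinearMap.id_coe, id_eq]
        exact boost_boost_neg B ℓ m hll hlm hml hmm t v)
    (by ext v
        simp only [LinearMap.coe_comp, Function.comp_apply, LinearMap.id_coe, id_eq]
        have := boost_boost_neg B ℓ m hll hlm hml hmm (-t) v
        rwa [neg_neg] at this)
end Boost

/-- ε-property, zeroth order, Remark 1.9: the frame components of a
type N `p`-form can be made (i) as small as desired in a suitable pseudo-orthonormal
frame, and (ii), if `F ≠ 0`, as large as desired. -/
theorem typeN_epsilon_property {V : Type*} [AddCommGroup V] [Module ℝ V]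
    [FiniteDimensional ℝ V] {n : ℕ}
    (B : V →ₗ[ℝ] V →ₗ[ℝ] ℝ)
    (hLor : ∃ e : Module.Basis (Fin n) ℝ V, IsLorentzBasis B e)
    {p : ℕ} (hp1 : 1 ≤ p) (hpn : p ≤ n - 1)
    (F : AlternatingMap ℝ V ℝ (Fin p))
    {ℓ : V} (hℓ : ℓ ≠ 0) (hN : TypeN B F ℓ) :
    (∀ ε : ℝ, 0 < ε → ∃ e : Module.Basis (Fin n) ℝ V, IsLorentzBasis B e ∧
        ∀ a : Fin p → Fin n, |F (fun i => e (a i))| < ε) ∧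
    (F ≠ 0 → ∀ M : ℝ, 0 < M → ∃ e : Module.Basis (Fin n) ℝ V, IsLorentzBasis B e ∧
        ∃ a : Fin p → Fin n, M < |F (fun i => e (a i))|) := by
  by_cases hF : F = 0
  · obtain ⟨e, he⟩ := hLor
    refine ⟨fun ε hε => ⟨e, he, fun a => ?_⟩, fun hFne => absurd hF hFne⟩
    simp only [hF, AlternatingMap.zero_apply, abs_zero]
    exact hε
  · obtain ⟨q, rfl⟩ : ∃ q, p = q + 1 := ⟨p - 1, by omega⟩
    obtain ⟨e, he⟩ := hLor
    obtain ⟨hι, hw⟩ := hN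
    -- symmetry of B
    have hsymm : ∀ x y : V, B x y = B y x := by
      have hBf : B = B.flip := by
        refine e.ext fun a => e.ext fun b => ?_
        rw [LinearMap.flip_apply, he a b, he b a]
        rcases eq_or_ne a b with rfl | hab
        · rfl
        · rw [if_neg hab, if_neg (Ne.symm hab)]
      intro x y
      conv_lhs => rw [hBf]
      rfl
    -- a vector on which F does not vanish
    have hFv : ∃ v, F v ≠ 0 := by
      by_contra h; push_neg at h; exact hF (AlternatingMap.ext h)
    obtain ⟨v₀, hv₀⟩ := hFv
    have hll : B ℓ ℓ = 0 := ell_null B F ℓ hw hι v₀ hv₀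
    -- B is nondegenerate on ℓ
    have hea : ∃ a : Fin n, B ℓ (e a) ≠ 0 := by
      by_contra h; push_neg at h
      apply hℓ
      have hcoord : ∀ a, e.repr ℓ a = 0 := by
        intro a
        have h1 : B ℓ (e a) = ∑ b : Fin n, e.repr ℓ b * B (e b) (e a) := by
          conv_lhs => rw [← e.sum_repr ℓ]
          rw [map_sum, LinearMap.sum_apply]
          exact Finset.sum_congr rfl fun b _ => by
            rw [map_smul, LinearMap.smul_apply, smul_eq_mul]
        have h2 : ∑ b : Fin n, e.repr ℓ b * B (e b) (e a) = e.repr ℓ a * epsSign a := by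
          rw [Finset.sum_eq_single a]
          · rw [he a a, if_pos rfl]
          · intro b _ hba; rw [he b a, if_neg hba, mul_zero]
          · intro ha; exact absurd (Finset.mem_univ a) ha
        have h3 : e.repr ℓ a * epsSign a = 0 := by rw [← h2, ← h1]; exact h a
        have heps : epsSign a ≠ 0 := by
          unfold epsSign; split <;> norm_num
        exact (mul_eq_zero.mp h3).resolve_right heps
      calc ℓ = ∑ a, e.repr ℓ a • e a := (e.sum_repr ℓ).symm
        _ = 0 := by simp [hcoord]
    obtain ⟨a₀, ha₀⟩ := hea
    obtain ⟨w', hlw'⟩ : ∃ w', B ℓ w' = 1 :=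
      ⟨(B ℓ (e a₀))⁻¹ • e a₀, by rw [map_smul, smul_eq_mul, inv_mul_cancel₀ ha₀]⟩
    set m : V := w' - (B w' w' / 2) • ℓ with hmdef
    have hlm : B ℓ m = 1 := by
      rw [hmdef, map_sub, map_smul, smul_eq_mul, hll, hlw']; ring
    have hml : B m ℓ = 1 := by rw [hsymm m ℓ, hlm]
    have hmm : B m m = 0 := by
      rw [hmdef]
      simp only [map_sub, map_smul, LinearMap.sub_apply, LinearMap.smul_apply, smul_eq_mul]
      rw [hll, hlw', hsymm w' ℓ, hlw']
      ring
    -- a nonzero frame component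
    have hcomp : ∃ c : Fin (q+1) → Fin n, F (fun i => e (c i)) ≠ 0 := by
      by_contra h; push_neg at h
      apply hF
      have hml0 : F.toMultilinearMap = (0 : MultilinearMap ℝ (fun _ : Fin (q+1) => V) ℝ) :=
        Module.Basis.ext_multilinear (fun _ => e) (fun a => by simpa using h a)
      ext v
      simpa using DFunLike.congr_fun hml0 v
    obtain ⟨c, hc⟩ := hcomp
    -- the key boost construction
    have key : ∀ t : ℝ, ∃ e' : Module.Basis (Fin n) ℝ V, IsLorentzBasis B e' ∧
        ∀ a : Fin (q+1) → Fin n,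
          F (fun i => e' (a i)) = Real.exp (-t) * F (fun i => e (a i)) := by
      intro t
      refine ⟨e.map (boostEquiv B ℓ m hll hlm hml hmm t), ?_, ?_⟩
      · intro a b
        rw [Module.Basis.map_apply, Module.Basis.map_apply]
        have hba : ∀ x : V, boostEquiv B ℓ m hll hlm hml hmm t x = boost B ℓ m t x :=
          fun x => rfl
        rw [hba, hba, boost_isometry B ℓ m hll hlm hml hmm hsymm t]
        exact he a b
      · intro a
        have hba : (fun i => (e.map (boostEquiv B ℓ m hll hlm hml hmm t)) (a i))
            = fun i : Fin (q+1) => (e (a i)) + ((Real.exp t - 1) * B m (e (a i))) • ℓ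
                + ((Real.exp (-t) - 1) * B ℓ (e (a i))) • m := by
          funext i; rw [Module.Basis.map_apply]; rfl
        rw [hba]
        exact scaling B F ℓ m hι hw hlm t _
    refine ⟨?_, ?_⟩
    · -- part (i)
      intro ε hε
      set C : ℝ := ∑ a : Fin (q+1) → Fin n, |F (fun i => e (a i))| with hC
      have hC0 : 0 ≤ C := Finset.sum_nonneg fun a _ => abs_nonneg _
      obtain ⟨e', he', hcomp'⟩ := key (Real.log ((C+1)/ε))
      refine ⟨e', he', fun a => ?_⟩
      rw [hcomp' a, abs_mul, abs_of_pos (Real.exp_pos _)]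
      have hle : |F (fun i => e (a i))| ≤ C :=
        Finset.single_le_sum (fun a _ => abs_nonneg (F fun i => e (a i)))
          (Finset.mem_univ a)
      have hexp : Real.exp (-Real.log ((C+1)/ε)) = ε/(C+1) := by
        rw [Real.exp_neg, Real.exp_log (by positivity), inv_div]
      rw [hexp]
      have h1 : ε/(C+1) * |F (fun i => e (a i))| ≤ ε/(C+1) * C :=
        mul_le_mul_of_nonneg_left hle (by positivity)
      have h2 : ε/(C+1) * C < ε := by
        rw [div_mul_eq_mul_div, div_lt_iff₀ (by positivity)]
        nlinarith
      linarith
    · -- part (ii)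
      intro _ M hM
      obtain ⟨e', he', hcomp'⟩ := key (Real.log (|F (fun i => e (c i))| / (M+1)))
      refine ⟨e', he', c, ?_⟩
      rw [hcomp' c, abs_mul, abs_of_pos (Real.exp_pos _)]
      have hx : 0 < |F (fun i => e (c i))| := abs_pos.mpr hc
      have hexp : Real.exp (-Real.log (|F (fun i => e (c i))| / (M+1)))
          = (M+1)/|F (fun i => e (c i))| := by
        rw [Real.exp_neg, Real.exp_log (by positivity), inv_div]
      rw [hexp, div_mul_cancel₀ _ (ne_of_gt hx)]
      linarith
end

section
/- Let n ≥ 3, label the coordinates of ℝⁿ as (u, r, x²,…,x^{n−1}), and let g be the constant flat (Minkowski, double-null Kundt form) metric with components g_{ur} = g_{ru} = 1, g_{αβ} = δ_{αβ} for α,β ∈ {2,…,n−1}, and all other components zero (its inverse g^{ab} has the same components). Let f_α : ℝⁿ → ℝ (α = 2,…,n−1) be differentiable functions whose values are independent of the coordinate r, and define the antisymmetric 2-form field F : ℝⁿ → (skew n×n matrices) by F_{uα} = f_α = −F_{αu} and all other components zero. Then F satisfies the source-free Maxwell equations — ∂_a F_{bc} + ∂_b F_{ca} + ∂_c F_{ab}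 = 0 for all indices a,b,c, and Σ_{a,b} g^{ab} ∂_a F_{bc} = 0 for every index c — if and only if, at every point, ∂_α f_β − ∂_β f_α = 0 for all α,β ∈ {2,…,n−1} and Σ_{α=2}^{n−1} ∂_α f_α = 0. (This is the reduction (2.6) of Maxwell's equations for a VSI 2-form, specialized to flat Kundt coordinates: Maxwell's equations hold iff the transverse 1-form f is closed and divergence-free.) -/
open scoped BigOperators

/-- The partial derivative `∂_a φ` of a real-valued function `φ` on `ℝⁿ` in the `a`-th
standard coordinate direction, evaluated at `x`. -/
noncomputable def pderiv' {n : ℕ} (a : Fin n) (φ : (Fin n → ℝ) → ℝ) (x : Fin n → ℝ) : ℝ :=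
  fderiv ℝ φ x (Pi.single a 1)

/-- The components of the constant flat (Minkowski, double-null Kundt form) metric on
`ℝⁿ` with coordinates `(u, r, x², …, x^{n−1})` (indices `0 = u`, `1 = r`):
`g_{ur} = g_{ru} = 1`, `g_{αβ} = δ_{αβ}` for `α, β ≥ 2`, all other components zero.
Its inverse has the same components. -/
def gFlat (n : ℕ) (a b : Fin n) : ℝ :=
  if ((a : ℕ) = 0 ∧ (b : ℕ) = 1) ∨ ((a : ℕ) = 1 ∧ (b : ℕ) = 0) then 1
  else if a = b ∧ 2 ≤ (a : ℕ) then 1 else 0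

lemma pderiv'_neg {n : ℕ} (a : Fin n) (φ : (Fin n → ℝ) → ℝ) (x : Fin n → ℝ) :
    pderiv' a (fun y => -(φ y)) x = -(pderiv' a φ x) := by
  unfold pderiv'
  rw [fderiv_fun_neg]
  simp

lemma pderiv'_const {n : ℕ} (a : Fin n) (c : ℝ) (x : Fin n → ℝ) :
    pderiv' a (fun _ => c) x = 0 := by
  unfold pderiv'; simp

lemma pderiv'_indep {n : ℕ} (a : Fin n) (φ : (Fin n → ℝ) → ℝ) (hφ : Differentiable ℝ φ)
    (h : ∀ x y : Fin n → ℝ, (∀ b : Fin n, (b : ℕ) ≠ (a : ℕ) → x b = y b) → φ x = φ y)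
    (x : Fin n → ℝ) : pderiv' a φ x = 0 := by
  have hx : x + (0:ℝ) • (Pi.single a 1 : Fin n → ℝ) = x := by simp
  have h1 : HasDerivAt (fun t : ℝ => x + t • (Pi.single a 1 : Fin n → ℝ)) (Pi.single a 1) 0 := by
    simpa using ((hasDerivAt_id (0:ℝ)).smul_const ((Pi.single a 1 : Fin n → ℝ))).const_add x
  have hl : HasFDerivAt φ (fderiv ℝ φ x) (x + (0:ℝ) • (Pi.single a 1 : Fin n → ℝ)) := by
    rw [hx]; exact (hφ x).hasFDerivAt
  have h2 : HasDerivAt (fun t : ℝ => φ (x + t • (Pi.single a 1 : Fin n → ℝ)))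
      (fderiv ℝ φ x (Pi.single a 1)) 0 := hl.comp_hasDerivAt 0 h1
  have h3 : (fun t : ℝ => φ (x + t • (Pi.single a 1 : Fin n → ℝ))) = fun _ => φ x := by
    funext t
    apply h
    intro b hb
    have hba : b ≠ a := fun e => hb (by rw [e])
    simp [Pi.single_eq_of_ne hba]
  rw [h3] at h2
  have := h2.unique (hasDerivAt_const 0 (φ x))
  simpa [pderiv'] using this

/-- for the VSI 2-form field `F` with `F_{uα} = f_α = −F_{αu}` (all other
components zero), with the `f_α` differentiable and independent of the coordinate `r`
(index `1`), the source-free Maxwell equations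
`∂_a F_{bc} + ∂_b F_{ca} + ∂_c F_{ab} = 0` and `Σ g^{ab} ∂_a F_{bc} = 0`
hold if and only if, at every point, `∂_α f_β − ∂_β f_α = 0` for all `α, β ≥ 2` and
`Σ_{α≥2} ∂_α f_α = 0` (the transverse 1-form `f` is closed and divergence-free). -/
theorem vsi_two_form_maxwell_reduction {n : ℕ} (hn : 3 ≤ n)
    (f : Fin n → (Fin n → ℝ) → ℝ)
    (hdiff : ∀ α : Fin n, 2 ≤ (α : ℕ) → Differentiable ℝ (f α))
    (hrindep : ∀ α : Fin n, 2 ≤ (α : ℕ) → ∀ x y : Fin n → ℝ,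
        (∀ b : Fin n, (b : ℕ) ≠ 1 → x b = y b) → f α x = f α y)
    (F : (Fin n → ℝ) → Fin n → Fin n → ℝ)
    (hFdef : ∀ (x : Fin n → ℝ) (a b : Fin n), F x a b =
        if (a : ℕ) = 0 ∧ 2 ≤ (b : ℕ) then f b x
        else if (b : ℕ) = 0 ∧ 2 ≤ (a : ℕ) then -(f a x)
        else 0) :
    ((∀ (x : Fin n → ℝ) (a b c : Fin n),
        pderiv' a (fun y => F y b c) x + pderiv' b (fun y => F y c a) x
          + pderiv' c (fun y => F y a b) x = 0) ∧
      (∀ (x : Fin n → ℝ) (c : Fin n),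
        ∑ a : Fin n, ∑ b : Fin n, gFlat n a b * pderiv' a (fun y => F y b c) x = 0))
    ↔
    (∀ x : Fin n → ℝ,
      (∀ α β : Fin n, 2 ≤ (α : ℕ) → 2 ≤ (β : ℕ) →
        pderiv' α (f β) x - pderiv' β (f α) x = 0) ∧
      ∑ α ∈ Finset.univ.filter (fun α : Fin n => 2 ≤ (α : ℕ)), pderiv' α (f α) x = 0) := by
  have hn0 : 0 < n := by omega
  set E0 : Fin n := ⟨0, hn0⟩ with hE0def
  have hE0v : (E0 : ℕ) = 0 := rfl
  -- r-independence ⇒ vanishing r-derivative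
  have hr : ∀ (a α : Fin n), (a : ℕ) = 1 → 2 ≤ (α : ℕ) → ∀ x : Fin n → ℝ,
      pderiv' a (f α) x = 0 := by
    intro a α ha hα x
    refine pderiv'_indep a (f α) (hdiff α hα) ?_ x
    intro x y hxy
    exact hrindep α hα x y (fun b hb => hxy b (by omega))
  -- the derivative of the components of F
  have hD : ∀ (x : Fin n → ℝ) (a b c : Fin n),
      pderiv' a (fun y => F y b c) x =
        if (b : ℕ) = 0 ∧ 2 ≤ (c : ℕ) then pderiv' a (f c) x
        else if (c : ℕ) = 0 ∧ 2 ≤ (b : ℕ) then -(pderiv' a (f b) x) else 0 := by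
    intro x a b c
    by_cases h1 : (b : ℕ) = 0 ∧ 2 ≤ (c : ℕ)
    · have hfun : (fun y => F y b c) = f c := by
        funext y; rw [hFdef, if_pos h1]
      rw [hfun, if_pos h1]
    · by_cases h2 : (c : ℕ) = 0 ∧ 2 ≤ (b : ℕ)
      · have hfun : (fun y => F y b c) = fun y => -(f b y) := by
          funext y; rw [hFdef, if_neg h1, if_pos h2]
        rw [hfun, if_neg h1, if_pos h2, pderiv'_neg]
      · have hfun : (fun y => F y b c) = fun _ => (0:ℝ) := by
          funext y; rw [hFdef, if_neg h1, if_neg h2]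
        rw [hfun, if_neg h1, if_neg h2, pderiv'_const]
  -- evaluation of the divergence
  have hdiv : ∀ (x : Fin n → ℝ) (c : Fin n),
      ∑ a : Fin n, ∑ b : Fin n, gFlat n a b * pderiv' a (fun y => F y b c) x =
        if (c : ℕ) = 0 then
          -(∑ α ∈ Finset.univ.filter (fun α : Fin n => 2 ≤ (α : ℕ)), pderiv' α (f α) x)
        else 0 := by
    intro x c
    by_cases hc0 : (c : ℕ) = 0
    · rw [if_pos hc0]
      have key : ∀ a b : Fin n, gFlat n a b * pderiv' a (fun y => F y b c) x =
          if a = b ∧ 2 ≤ (a : ℕ) then -(pderiv' a (f a) x) else 0 := by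
        intro a b
        rw [hD]
        unfold gFlat
        rcases eq_or_ne a b with rfl | hab
        · simp only [eq_self_iff_true, true_and]
          split_ifs
          all_goals first | ring1 | (exfalso; omega)
        · rw [if_neg (show ¬(a = b ∧ 2 ≤ (a : ℕ)) from fun h => hab h.1), if_neg (show ¬(a = b ∧ 2 ≤ (a : ℕ)) from fun h => hab h.1)]
          split_ifs
          all_goals first | ring1 | (exfalso; omega)
      calc ∑ a : Fin n, ∑ b : Fin n, gFlat n a b * pderiv' a (fun y => F y b c) x
          = ∑ a : Fin n, ∑ b : Fin n,
              (if a = b ∧ 2 ≤ (a : ℕ) then -(pderiv' a (f a) x) else 0) :=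
            Finset.sum_congr rfl fun a _ => Finset.sum_congr rfl fun b _ => key a b
        _ = ∑ a : Fin n, (if 2 ≤ (a : ℕ) then -(pderiv' a (f a) x) else 0) := by
            refine Finset.sum_congr rfl fun a _ => ?_
            simp [ite_and]
        _ = -(∑ α ∈ Finset.univ.filter (fun α : Fin n => 2 ≤ (α : ℕ)),
              pderiv' α (f α) x) := by
            rw [Finset.sum_filter, ← Finset.sum_neg_distrib]
            exact Finset.sum_congr rfl fun a _ => by split_ifs <;> simp
    · rw [if_neg hc0]
      have key : ∀ a b : Fin n, gFlat n a b * pderiv' a (fun y => F y b c) x = 0 := by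
        intro a b
        rw [hD]
        unfold gFlat
        rcases eq_or_ne a b with rfl | hab
        · simp only [eq_self_iff_true, true_and]
          split_ifs
          all_goals first | ring1 | (exfalso; omega)
        · rw [if_neg (show ¬(a = b ∧ 2 ≤ (a : ℕ)) from fun h => hab h.1)]
          split_ifs
          all_goals first
            | ring1
            | (exfalso; omega)
            | (rw [hr a c (by omega) (by omega)]; ring1)
      simp [key]
  constructor
  · rintro ⟨hB, hM⟩ x
    constructor
    · intro α β hα hβ
      have h := hB x α E0 β
      rw [hD x α E0 β, hD x E0 β α, hD x β α E0] at h
      have hα0 : ¬((α : ℕ) = 0) := by omega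
      have hβ0 : ¬((β : ℕ) = 0) := by omega
      simp only [hE0v] at h
      simp [hα, hβ, hα0, hβ0] at h
      linarith
    · have h := hM x E0
      rw [hdiv x E0, if_pos hE0v] at h
      linarith
  · intro hR
    constructor
    · intro x a b c
      have hcl := (hR x).1
      rw [hD x a b c, hD x b c a, hD x c a b]
      split_ifs
      all_goals first
          | ring1
          | (exfalso; omega)
          | (have hab : a = b := Fin.val_injective (by omega); subst hab; ring1)
          | (have hac : a = c := Fin.val_injective (by omega); subst hac; ring1)
          | (have hbc : b = c := Fin.val_injective (by omega); subst hbc; ring1)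
          | (rw [hr a b (by omega) (by omega)]; ring1)
          | (rw [hr a c (by omega) (by omega)]; ring1)
          | (rw [hr b a (by omega) (by omega)]; ring1)
          | (rw [hr b c (by omega) (by omega)]; ring1)
          | (rw [hr c a (by omega) (by omega)]; ring1)
          | (rw [hr c b (by omega) (by omega)]; ring1)
          | (linarith [hcl a b (by omega) (by omega)])
          | (linarith [hcl a c (by omega) (by omega)])
          | (linarith [hcl b a (by omega) (by omega)])
          | (linarith [hcl b c (by omega) (by omega)])
          | (linarith [hcl c a (by omega) (by omega)])
          | (linarith [hcl c b (by omega) (by omega)])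
    · intro x c
      rw [hdiv x c]
      split_ifs with h
      · rw [(hR x).2, neg_zero]
      · rfl
end
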